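/- arXiv:2402.06612 — 6 statements merged into one kernel-verified Lean document; each statement's English description precedes it below -/
import Mathlib

section
/- Let w be a right-infinite word over a finite alphabet Σ = {x_1, …, x_m}. Then the monomial algebra A_w admits a faithful right point module. Explicitly, the graded right module P = ⊕_{i≥0} F·e_i with action e_i · x_j = e_{i+1} if x_j = w[i] and e_i · x_j = 0 otherwise is a well-defined point A_w-module whose annihilator in A_w is zero. -/
noncomputable section

open scoped BigOperators

/-- The free associative `F`-algebra on `m` generators, realized as the monoid
algebra of the free monoid on `Fin m`. -/
abbrev FreeAlg (F : Type) [Field F] (m : ℕ) : Type :=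
  MonoidAlgebra F (FreeMonoid (Fin m))

variable (F : Type) [Field F] {m : ℕ}

/-- The element of the free algebra corresponding to a word `u`. -/
def wordElem (u : List (Fin m)) : FreeAlg F m :=
  MonoidAlgebra.of F (FreeMonoid (Fin m)) (FreeMonoid.ofList u)

/-- The relation identifying the forbidden words in `W` with `0`. -/
def monRel (W : Set (List (Fin m))) : FreeAlg F m → FreeAlg F m → Prop :=
  fun a b => (∃ u ∈ W, a = wordElem F u) ∧ b = 0

/-- The monomial algebra `F⟨x_1,…,x_m⟩/⟨W⟩` determined by the set `W` of forbidden
words. -/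
abbrev MonAlg (W : Set (List (Fin m))) : Type :=
  RingQuot (monRel F W)

/-- The canonical projection from the free algebra onto the monomial algebra. -/
def monAlgPi (W : Set (List (Fin m))) : FreeAlg F m →ₐ[F] MonAlg F W :=
  RingQuot.mkAlgHom F (monRel F W)

/-- The image of the word `u` in the monomial algebra; `u` is a *nonzero monomial*
of the monomial algebra iff `mono F W u ≠ 0`. -/
def mono (W : Set (List (Fin m))) (u : List (Fin m)) : MonAlg F W :=
  monAlgPi F W (wordElem F u)

/-- The degree-`d` homogeneous component of the monomial algebra, spanned by the
images of the words of length `d`. -/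
def homog (W : Set (List (Fin m))) (d : ℕ) : Submodule F (MonAlg F W) :=
  Submodule.span F { a | ∃ u : List (Fin m), u.length = d ∧ a = mono F W u }
/-- The right action of a single word on the graded vector space `⊕_{i≥0} F·e_i`,
where the letter `x_j` acts by `e_i · x_j = lam i j • e_{i+1}`. -/
def ptAct (lam : ℕ → Fin m → F) : List (Fin m) → ((ℕ →₀ F) →ₗ[F] (ℕ →₀ F))
  | [] => LinearMap.id
  | j :: u => (ptAct lam u).comp (Finsupp.lsum F fun i => lam i j • Finsupp.lsingle (i + 1))

/-- The linear extension of the right action to the whole free algebra. -/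
def algAct (lam : ℕ → Fin m → F) (a : FreeAlg F m) : (ℕ →₀ F) →ₗ[F] (ℕ →₀ F) :=
  Finsupp.sum a.coeff fun u c => c • ptAct F lam (FreeMonoid.toList u)

/-- The basis vector `e_i` of the point module. -/
def eVec (i : ℕ) : ℕ →₀ F := Finsupp.single i 1

/-- The scalar data `lam` defines a (right) point module over the monomial algebra
with forbidden words `W`: the action of the free algebra descends to the quotient,
and the module is generated by `e_0`.  (The homogeneous components `F·e_i` are
one-dimensional by construction.) -/
structure IsPointModule (W : Set (List (Fin m))) (lam : ℕ → Fin m → F) : Prop where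
  welldef : ∀ a : FreeAlg F m, monAlgPi F W a = 0 → algAct F lam a = 0
  cyclic : ∀ v : ℕ →₀ F, ∃ a : FreeAlg F m, algAct F lam a (eVec F 0) = v

/-- The point module given by `lam` is faithful: the only element of the monomial
algebra annihilating it is `0`. -/
def IsFaithfulPM (W : Set (List (Fin m))) (lam : ℕ → Fin m → F) : Prop :=
  ∀ a : FreeAlg F m, algAct F lam a = 0 → monAlgPi F W a = 0

/-- The annihilator in the monomial algebra of the point module given by `lam`. -/
def annSet (W : Set (List (Fin m))) (lam : ℕ → Fin m → F) : Set (MonAlg F W) :=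
  { x | ∀ a : FreeAlg F m, monAlgPi F W a = x → algAct F lam a = 0 }
/-- The set of finite factors (subwords) of the right-infinite word `w`. -/
def factorsOf (w : ℕ → Fin m) : Set (List (Fin m)) :=
  { u | ∃ i : ℕ, u = (List.range u.length).map fun k => w (i + k) }

/-- `w` is uniformly recurrent: every factor `u` of `w` occurs in every sufficiently
long factor of `w`. -/
def UniformlyRecurrent (w : ℕ → Fin m) : Prop :=
  ∀ u ∈ factorsOf w, ∃ C : ℕ, ∀ v ∈ factorsOf w, v.length = C → u <:+: v

/-- `w` is eventually periodic. -/
def EventuallyPeriodic (w : ℕ → Fin m) : Prop :=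
  ∃ p : ℕ, 0 < p ∧ ∃ N : ℕ, ∀ i : ℕ, N ≤ i → w (i + p) = w i


namespace Statement0Aux

variable {m : ℕ}

/-- The window of `w` of length `n` starting at `i`. -/
def win (w : ℕ → Fin m) (i n : ℕ) : List (Fin m) :=
  (List.range n).map fun k => w (i + k)

@[simp] lemma win_length (w : ℕ → Fin m) (i n : ℕ) : (win w i n).length = n := by
  simp [win]

lemma win_succ (w : ℕ → Fin m) (i n : ℕ) :
    win w i (n + 1) = w i :: win w (i + 1) n := by
  unfold win
  rw [List.range_succ_eq_map, List.map_cons, List.map_map]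
  refine congrArg _ (List.map_congr_left fun k _ => ?_)
  simp only [Function.comp_apply]
  congr 1
  omega

/-- Matching coefficient: `1` if `u` equals the window of `w` at `i`, else `0`. -/
def mc (F : Type) [Field F] (w : ℕ → Fin m) (i : ℕ) (u : List (Fin m)) : F :=
  if u = win w i u.length then 1 else 0

variable (F : Type) [Field F]

lemma mc_cons (w : ℕ → Fin m) (i : ℕ) (j : Fin m) (v : List (Fin m)) :
    mc F w i (j :: v) = (if w i = j then (1 : F) else 0) * mc F w (i + 1) v := by
  simp only [mc, List.length_cons, win_succ, List.cons.injEq]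
  by_cases h1 : j = w i
  · subst h1
    by_cases h2 : v = win w (i + 1) v.length
    · rw [if_pos ⟨rfl, h2⟩, if_pos rfl, if_pos h2, one_mul]
    · rw [if_neg fun hc => h2 hc.2, if_pos rfl, if_neg h2, mul_zero]
  · have h1' : ¬ w i = j := fun h => h1 h.symm
    rw [if_neg fun hc => h1 hc.1, if_neg h1', zero_mul]

/-- The abbreviation for our specific `lam`. -/
def lamW (w : ℕ → Fin m) : ℕ → Fin m → F := fun i j => if w i = j then (1 : F) else 0

lemma ptAct_single (w : ℕ → Fin m) (u : List (Fin m)) (i : ℕ) (c : F) :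
    ptAct F (lamW F w) u (Finsupp.single i c)
      = Finsupp.single (i + u.length) (mc F w i u * c) := by
  induction u generalizing i c with
  | nil => simp [ptAct, mc, win]
  | cons j v ih =>
    rw [ptAct, LinearMap.comp_apply, Finsupp.lsum_apply,
      Finsupp.sum_single_index (by simp), LinearMap.smul_apply, Finsupp.lsingle_apply,
      Finsupp.smul_single, smul_eq_mul, ih, mc_cons]
    have hlen : i + 1 + v.length = i + (v.length + 1) := by omega
    rw [hlen]
    unfold lamW
    congr 1
    ring

lemma ptAct_append (lam : ℕ → Fin m → F) (u v : List (Fin m)) :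
    ptAct F lam (u ++ v) = (ptAct F lam v).comp (ptAct F lam u) := by
  induction u with
  | nil => rfl
  | cons j u ih =>
    rw [List.cons_append, ptAct, ptAct, ih, LinearMap.comp_assoc]

/-- If `u` is not a factor of `w`, then `u` acts by zero. -/
lemma ptAct_eq_zero (w : ℕ → Fin m) (u : List (Fin m)) (hu : u ∉ factorsOf w) :
    ptAct F (lamW F w) u = 0 := by
  refine Finsupp.lhom_ext fun i c => ?_
  rw [ptAct_single]
  have hmc : mc F w i u = 0 := by
    rw [mc, if_neg]
    intro h
    exact hu ⟨i, h⟩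
  simp [hmc]

/-- `algAct` as a linear map. -/
def algActL (lam : ℕ → Fin m → F) : FreeAlg F m →ₗ[F] ((ℕ →₀ F) →ₗ[F] (ℕ →₀ F)) :=
  (Finsupp.linearCombination F fun u => ptAct F lam (FreeMonoid.toList u)) ∘ₗ
    (MonoidAlgebra.coeffLinearEquiv F).toLinearMap

lemma algAct_eq (lam : ℕ → Fin m → F) (a : FreeAlg F m) :
    algAct F lam a = algActL F lam a := rfl

lemma algAct_wordElem (lam : ℕ → Fin m → F) (u : List (Fin m)) :
    algAct F lam (wordElem F u) = ptAct F lam u := by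
  rw [wordElem, MonoidAlgebra.of_apply, algAct, MonoidAlgebra.coeff_single,
    Finsupp.sum_single_index (by simp), one_smul]
  rfl

/-- The monoid hom underlying the action. -/
def actMonHom (w : ℕ → Fin m) : FreeMonoid (Fin m) →* (Module.End F (ℕ →₀ F))ᵐᵒᵖ where
  toFun u := MulOpposite.op (ptAct F (lamW F w) (FreeMonoid.toList u))
  map_one' := rfl
  map_mul' u v := by
    show MulOpposite.op _ = MulOpposite.op _ * MulOpposite.op _
    rw [← MulOpposite.op_mul, Module.End.mul_eq_comp, ← ptAct_append]
    rfl

@[simp] lemma actMonHom_apply (w : ℕ → Fin m) (u : FreeMonoid (Fin m)) :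
    actMonHom F w u = MulOpposite.op (ptAct F (lamW F w) (FreeMonoid.toList u)) := rfl

/-- The algebra hom from the free algebra to the opposite endomorphism algebra. -/
def actAlgHom (w : ℕ → Fin m) : FreeAlg F m →ₐ[F] (Module.End F (ℕ →₀ F))ᵐᵒᵖ :=
  MonoidAlgebra.lift F _ (FreeMonoid (Fin m)) (actMonHom F w)

lemma actAlgHom_apply (w : ℕ → Fin m) (a : FreeAlg F m) :
    actAlgHom F w a = MulOpposite.op (algAct F (lamW F w) a) := by
  rw [actAlgHom, MonoidAlgebra.lift_apply, algAct, Finsupp.sum, Finsupp.sum,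
    Finset.op_sum]
  refine Finset.sum_congr rfl fun u _ => ?_
  rw [actMonHom_apply, MulOpposite.op_smul]

lemma actAlgHom_rel (w : ℕ → Fin m) : ∀ ⦃x y : FreeAlg F m⦄,
    monRel F ((factorsOf w)ᶜ) x y → actAlgHom F w x = actAlgHom F w y := by
  rintro x y ⟨⟨u, hu, rfl⟩, rfl⟩
  rw [map_zero, actAlgHom_apply, algAct_wordElem, ptAct_eq_zero F w u hu,
    MulOpposite.op_zero]

/-- If `algAct a = 0`, every word in the support of `a` is a non-factor of `w`. -/
lemma support_nonfactor (w : ℕ → Fin m) (a : FreeAlg F m)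
    (h : algAct F (lamW F w) a = 0) (u : FreeMonoid (Fin m)) (hu : u ∈ a.coeff.support) :
    FreeMonoid.toList u ∉ factorsOf w := by
  classical
  intro hfac
  obtain ⟨i, hi⟩ := hfac
  have hi' : FreeMonoid.toList u = win w i (FreeMonoid.toList u).length := hi
  set L := (FreeMonoid.toList u).length with hL
  have h1 : ((algAct F (lamW F w) a) (Finsupp.single i (1 : F))) (i + L) = 0 := by
    rw [h]; rfl
  rw [algAct, Finsupp.sum, LinearMap.sum_apply, Finsupp.finset_sum_apply] at h1
  have h2 : ∀ v ∈ a.coeff.support,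
      ((a.coeff v • ptAct F (lamW F w) (FreeMonoid.toList v)) (Finsupp.single i (1 : F))) (i + L)
        = if v = u then a.coeff u else 0 := by
    intro v _
    rw [LinearMap.smul_apply, ptAct_single, Finsupp.smul_apply, Finsupp.single_apply]
    by_cases hvu : v = u
    · subst hvu
      rw [if_pos rfl, if_pos rfl]
      have hmc : mc F w i (FreeMonoid.toList v) = 1 := by
        rw [mc, if_pos hi']
      rw [hmc]
      simp
    · rw [if_neg hvu]
      by_cases hlen : i + (FreeMonoid.toList v).length = i + L
      · have hmc : mc F w i (FreeMonoid.toList v) = 0 := by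
          rw [mc, if_neg]
          intro hvwin
          apply hvu
          have hl : (FreeMonoid.toList v).length = L := by omega
          have : FreeMonoid.toList v = FreeMonoid.toList u := by
            rw [hvwin, hl, ← hi']
          have := congrArg FreeMonoid.ofList this
          rwa [FreeMonoid.ofList_toList, FreeMonoid.ofList_toList] at this
        rw [if_pos hlen, hmc]
        simp
      · rw [if_neg hlen]
        simp
  rw [Finset.sum_congr rfl h2, Finset.sum_ite_eq' a.coeff.support u fun _ => a.coeff u,
    if_pos hu] at h1
  exact Finsupp.mem_support_iff.mp hu h1

/-- A word that is forbidden maps to zero in the monomial algebra. -/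
lemma mono_forbidden (W : Set (List (Fin m))) (u : List (Fin m)) (hu : u ∈ W) :
    monAlgPi F W (wordElem F u) = 0 := by
  have hrel : monRel F W (wordElem F u) 0 := ⟨⟨u, hu, rfl⟩, rfl⟩
  have h2 := RingQuot.mkAlgHom_rel F (s := monRel F W) hrel
  rw [map_zero] at h2
  exact h2

lemma mc_win (w : ℕ → Fin m) (i n : ℕ) : mc F w i (win w i n) = 1 := by
  rw [mc, win_length, if_pos rfl]

lemma algActL_single (lam : ℕ → Fin m → F) (u : List (Fin m)) (c : F) :
    algActL F lam (MonoidAlgebra.single (FreeMonoid.ofList u) c) = c • ptAct F lam u := by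
  rw [algActL, LinearMap.comp_apply]
  exact Finsupp.linearCombination_single (v := fun u => ptAct F lam (FreeMonoid.toList u))
    (c := c) (a := FreeMonoid.ofList u)

lemma monAlgPi_single_eq_zero (W : Set (List (Fin m))) (u : FreeMonoid (Fin m)) (c : F)
    (hu : FreeMonoid.toList u ∈ W) : monAlgPi F W (MonoidAlgebra.single u c) = 0 := by
  have h1 : (MonoidAlgebra.single u c : FreeAlg F m) = c • wordElem F (FreeMonoid.toList u) := by
    rw [wordElem, MonoidAlgebra.of_apply, FreeMonoid.ofList_toList, MonoidAlgebra.smul_single,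
      smul_eq_mul, mul_one]
  rw [h1, map_smul, mono_forbidden F W _ hu, smul_zero]

end Statement0Aux

/-- For every right-infinite word `w` over the alphabet
`{x_1,…,x_m}`, the monomial algebra `A_w` (with forbidden words the non-factors
of `w`) admits a faithful right point module; explicitly, the module
`P = ⊕_{i≥0} F·e_i` with `e_i · x_j = e_{i+1}` if `x_j = w[i]` and `e_i · x_j = 0`
otherwise is a well-defined point `A_w`-module with zero annihilator. -/

theorem statement0 (F : Type) [Field F] (m : ℕ) (w : ℕ → Fin m) :
    IsPointModule F ((factorsOf w)ᶜ)
        (fun i j => if w i = j then (1 : F) else 0) ∧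
      IsFaithfulPM F ((factorsOf w)ᶜ)
        (fun i j => if w i = j then (1 : F) else 0) := by
  classical
  open Statement0Aux in
  refine ⟨⟨?_, ?_⟩, ?_⟩
  · -- well-definedness
    intro a ha
    have hlift := RingQuot.liftAlgHom_mkAlgHom_apply (S := F)
      (actAlgHom F w) (actAlgHom_rel F w) a
    have hpi : RingQuot.mkAlgHom F (monRel F ((factorsOf w)ᶜ)) a
        = monAlgPi F ((factorsOf w)ᶜ) a := rfl
    rw [hpi, ha, map_zero] at hlift
    have h2 := actAlgHom_apply F w a
    rw [← hlift] at h2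
    have h3 : algAct F (lamW F w) a = 0 := by
      have := congrArg MulOpposite.unop h2
      simpa using this.symm
    exact h3
  · -- cyclicity
    intro v
    refine ⟨Finsupp.sum v fun n c =>
      MonoidAlgebra.single (FreeMonoid.ofList (win w 0 n)) c, ?_⟩
    show (algAct F (lamW F w) _) (eVec F 0) = v
    rw [algAct_eq, map_finsuppSum, Finsupp.sum, LinearMap.sum_apply]
    have hterm : ∀ n ∈ v.support,
        (algActL F (lamW F w)
          (MonoidAlgebra.single (FreeMonoid.ofList (win w 0 n)) (v n))) (eVec F 0)
          = Finsupp.single n (v n) := by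
      intro n _
      rw [algActL_single, LinearMap.smul_apply]
      simp only [eVec]
      rw [ptAct_single, mc_win, one_mul, win_length, zero_add, Finsupp.smul_single,
        smul_eq_mul, mul_one]
    rw [Finset.sum_congr rfl hterm]
    exact Finsupp.sum_single v
  · -- faithfulness
    intro a ha
    have hsupp : ∀ u ∈ a.coeff.support, FreeMonoid.toList u ∉ factorsOf w :=
      fun u hu => support_nonfactor F w a ha u hu
    calc monAlgPi F ((factorsOf w)ᶜ) a
        = monAlgPi F ((factorsOf w)ᶜ) (Finsupp.sum a.coeff fun u c => MonoidAlgebra.single u c) := by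
          exact congrArg _ (MonoidAlgebra.sum_coeff_single a).symm
      _ = Finsupp.sum a.coeff fun u c => monAlgPi F ((factorsOf w)ᶜ) (MonoidAlgebra.single u c) :=
          map_finsuppSum _ _ _
      _ = 0 := Finset.sum_eq_zero fun u hu =>
          monAlgPi_single_eq_zero F ((factorsOf w)ᶜ) u (a.coeff u) (hsupp u hu)
end
end

section
/- Let A = F⟨x_1, …, x_m⟩/I be a monomial algebra and let Λ = (λ_{i,j})_{i≥0, 1≤j≤m} be scalars in F such that for every i ≥ 0 some λ_{i,j} is nonzero; set C_i = { x_j : λ_{i,j} ≠ 0 }. Then the assignment e_i · x_j = λ_{i,j} e_{i+1} defines a well-defined point A-module structure on ⊕_{i≥0} F·e_i if and only if the sequence (C_i)_{i≥0} is a tree over A. In particular, every point A-module P = ⊕ F·e_i with e_i · x_j = λ_{i,j} e_{i+1} gives rise to a tree (C_i) over A, and conversely every tree over A together with such compatible nonvanishing scalar data yields a point A-module. -/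
noncomputable section

open scoped BigOperators

variable (F : Type) [Field F] {m : ℕ}

/-- The word `u`, read starting at position `i`, selects its letters from the
sequence of sets `C`. -/
def SelectsFrom (C : ℕ → Set (Fin m)) (i : ℕ) (u : List (Fin m)) : Prop :=
  ∀ (k : ℕ) (h : k < u.length), u.get ⟨k, h⟩ ∈ C (i + k)

/-- A tree over the monomial algebra with forbidden words `W`: a sequence of
nonempty subsets of the alphabet all of whose "segment words" are nonzero
monomials of the algebra. -/
def IsTree (W : Set (List (Fin m))) (C : ℕ → Set (Fin m)) : Prop :=
  (∀ i, (C i).Nonempty) ∧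
    ∀ (i : ℕ) (u : List (Fin m)), SelectsFrom C i u → mono F W u ≠ 0

section Aux

variable {F}

/-- Product of the scalars along a word starting at position `i`. -/
def prodLam (lam : ℕ → Fin m → F) : ℕ → List (Fin m) → F
  | _, [] => 1
  | i, j :: u => lam i j * prodLam lam (i + 1) u

lemma ptAct_single (lam : ℕ → Fin m → F) (u : List (Fin m)) :
    ∀ (i : ℕ) (c : F), ptAct F lam u (Finsupp.single i c) =
      (c * prodLam lam i u) • eVec F (i + u.length) := by
  induction u with
  | nil => intro i c; simp [ptAct, prodLam, eVec, Finsupp.smul_single]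
  | cons j u ih =>
      intro i c
      have h1 : ((Finsupp.lsum F fun i' => lam i' j • Finsupp.lsingle (i' + 1) :
            (ℕ →₀ F) →ₗ[F] (ℕ →₀ F)))
          (Finsupp.single i c) = Finsupp.single (i + 1) (lam i j * c) := by
        have h0 := Finsupp.lsum_single (R := F) F
          (fun i' => lam i' j • Finsupp.lsingle (i' + 1) :
            ℕ → F →ₗ[F] (ℕ →₀ F)) i c
        rw [h0]
        simp [Finsupp.smul_single, mul_comm]
      simp only [ptAct, LinearMap.comp_apply, h1, ih, prodLam]
      rw [show i + (j :: u).length = i + 1 + u.length by simp; omega]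
      congr 1
      ring

lemma ptAct_eVec (lam : ℕ → Fin m → F) (u : List (Fin m)) (i : ℕ) :
    ptAct F lam u (eVec F i) = prodLam lam i u • eVec F (i + u.length) := by
  rw [eVec, ptAct_single, one_mul]

lemma selectsFrom_nil (C : ℕ → Set (Fin m)) (i : ℕ) : SelectsFrom C i [] := by
  intro k h; simp at h

lemma selectsFrom_cons (C : ℕ → Set (Fin m)) (i : ℕ) (j : Fin m) (u : List (Fin m)) :
    SelectsFrom C i (j :: u) ↔ j ∈ C i ∧ SelectsFrom C (i + 1) u := by
  constructor
  · intro h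
    refine ⟨by simpa using h 0 (by simp), fun k hk => ?_⟩
    have := h (k + 1) (by simp; omega)
    simpa [show i + (k + 1) = i + 1 + k by omega] using this
  · rintro ⟨h1, h2⟩ k hk
    cases k with
    | zero => simpa using h1
    | succ k =>
        have := h2 k (by simp at hk ⊢; omega)
        simpa [show i + (k + 1) = i + 1 + k by omega] using this

lemma prodLam_ne_zero_iff (lam : ℕ → Fin m → F) (u : List (Fin m)) :
    ∀ i : ℕ, prodLam lam i u ≠ 0 ↔
      SelectsFrom (fun i' => { j : Fin m | lam i' j ≠ 0 }) i u := by
  induction u with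
  | nil => intro i; simp [prodLam]; exact selectsFrom_nil _ i
  | cons j u ih =>
      intro i
      rw [selectsFrom_cons, prodLam, mul_ne_zero_iff, ih]
      simp [Set.mem_setOf_eq]

/-- The action of the free algebra as an algebra hom to the opposite of the
endomorphism ring. -/
def actHom (lam : ℕ → Fin m → F) : FreeAlg F m →ₐ[F] (Module.End F (ℕ →₀ F))ᵐᵒᵖ :=
  MonoidAlgebra.lift F _ (FreeMonoid (Fin m))
    (FreeMonoid.lift fun j => MulOpposite.op
      (((Finsupp.lsum F fun i => lam i j • Finsupp.lsingle (i + 1)) :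
        (ℕ →₀ F) →ₗ[F] (ℕ →₀ F)) : Module.End F (ℕ →₀ F)))

lemma freeLift_eq (lam : ℕ → Fin m → F) (x : FreeMonoid (Fin m)) :
    (FreeMonoid.lift fun j => MulOpposite.op
      (((Finsupp.lsum F fun i => lam i j • Finsupp.lsingle (i + 1)) :
        (ℕ →₀ F) →ₗ[F] (ℕ →₀ F)) : Module.End F (ℕ →₀ F))) x =
      MulOpposite.op (ptAct F lam (FreeMonoid.toList x)) := by
  induction x using FreeMonoid.recOn with
  | one => rfl
  | of_mul j x ih =>
      rw [map_mul, ih, FreeMonoid.lift_eval_of]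
      rfl

lemma actHom_wordElem (lam : ℕ → Fin m → F) (u : List (Fin m)) :
    actHom lam (wordElem F u) = MulOpposite.op (ptAct F lam u) := by
  rw [actHom, wordElem, MonoidAlgebra.lift_of, freeLift_eq]
  rfl

lemma algAct_eq (lam : ℕ → Fin m → F) (a : FreeAlg F m) :
    algAct F lam a = (actHom lam a).unop := by
  classical
  induction a using MonoidAlgebra.induction_linear with
  | zero => simp [algAct, Finsupp.sum_zero_index]
  | add a b ha hb =>
      rw [map_add, MulOpposite.unop_add, ← ha, ← hb, algAct, algAct, algAct, MonoidAlgebra.coeff_add,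
        Finsupp.sum_add_index (by intro u _; simp) (by intro u _ c d; rw [add_smul])]
  | single u c =>
      have h1 : (MonoidAlgebra.single u c : FreeAlg F m) = c • wordElem F (FreeMonoid.toList u) := by
        rw [wordElem, FreeMonoid.ofList_toList, MonoidAlgebra.of_apply, MonoidAlgebra.smul_single', mul_one]
      rw [h1, map_smul, actHom_wordElem, algAct, ← h1]
      rw [MonoidAlgebra.coeff_single, Finsupp.sum_single_index (by simp)]
      simp

lemma algAct_wordElem (lam : ℕ → Fin m → F) (u : List (Fin m)) :
    algAct F lam (wordElem F u) = ptAct F lam u := by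
  rw [algAct_eq, actHom_wordElem, MulOpposite.unop_op]

lemma mono_mem_W_eq_zero (W : Set (List (Fin m))) {u : List (Fin m)} (hu : u ∈ W) :
    mono F W u = 0 := by
  have h := RingQuot.mkAlgHom_rel F (s := monRel F W)
    (x := wordElem F u) (y := 0) ⟨⟨u, hu, rfl⟩, rfl⟩
  rw [mono, monAlgPi, h, map_zero]

/-- Under the tree hypothesis, every forbidden word acts as zero. -/
lemma ptAct_forbidden (W : Set (List (Fin m))) (lam : ℕ → Fin m → F)
    (hT : IsTree F W fun i => { j : Fin m | lam i j ≠ 0 })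
    {u : List (Fin m)} (hu : u ∈ W) : ptAct F lam u = 0 := by
  apply Finsupp.lhom_ext
  intro i c
  rw [ptAct_single]
  have hp : prodLam lam i u = 0 := by
    by_contra hne
    exact hT.2 i u ((prodLam_ne_zero_iff lam u i).mp hne) (mono_mem_W_eq_zero W hu)
  simp [hp]

/-- The word of length `n` starting at position `i` built from a choice of
letters. -/
def treeWord (c : ℕ → Fin m) : ℕ → ℕ → List (Fin m)
  | _, 0 => []
  | i, n + 1 => c i :: treeWord c (i + 1) n

lemma treeWord_length (c : ℕ → Fin m) : ∀ i n, (treeWord c i n).length = n := by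
  intro i n
  induction n generalizing i with
  | zero => rfl
  | succ n ih => simp [treeWord, ih]

lemma prodLam_treeWord_ne_zero (lam : ℕ → Fin m → F) (c : ℕ → Fin m)
    (hc : ∀ i, lam i (c i) ≠ 0) : ∀ i n, prodLam lam i (treeWord c i n) ≠ 0 := by
  intro i n
  induction n generalizing i with
  | zero => simp [treeWord, prodLam]
  | succ n ih => exact mul_ne_zero (hc i) (ih (i + 1))

end Aux

/-- For a monomial algebra `A = F⟨x_1,…,x_m⟩/I` and scalar data
`Λ = (λ_{i,j})` with, for every `i`, some `λ_{i,j} ≠ 0` (so each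
`C_i = {x_j : λ_{i,j} ≠ 0}` is nonempty), the assignment `e_i · x_j = λ_{i,j} e_{i+1}`
defines a well-defined point `A`-module structure on `⊕_{i≥0} F·e_i` if and only if
the sequence `(C_i)` is a tree over `A`. -/
theorem statement1 (F : Type) [Field F] (m : ℕ) (W : Set (List (Fin m)))
    (lam : ℕ → Fin m → F) (hgen : ∀ i : ℕ, ∃ j : Fin m, lam i j ≠ 0) :
    IsPointModule F W lam ↔ IsTree F W (fun i => { j : Fin m | lam i j ≠ 0 }) := by
  constructor
  · -- point module → tree
    intro hPM
    refine ⟨fun i => (hgen i).imp fun j hj => hj, fun i u hsel hmono => ?_⟩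
    have h0 : algAct F lam (wordElem F u) = 0 := hPM.welldef _ hmono
    rw [algAct_wordElem] at h0
    have h1 : ptAct F lam u (eVec F i) = 0 := by rw [h0]; rfl
    rw [ptAct_eVec] at h1
    have hp : prodLam lam i u ≠ 0 := (prodLam_ne_zero_iff lam u i).mpr hsel
    have : (prodLam lam i u • eVec F (i + u.length)) (i + u.length) = 0 := by
      rw [h1]; rfl
    rw [Finsupp.smul_apply, eVec, Finsupp.single_eq_same, smul_eq_mul, mul_one] at this
    exact hp this
  · -- tree → point module
    intro hT
    constructor
    · -- well-definedness
      intro a ha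
      have hrel : ∀ ⦃x y : FreeAlg F m⦄, monRel F W x y → actHom lam x = actHom lam y := by
        rintro x y ⟨⟨u, hu, rfl⟩, rfl⟩
        rw [actHom_wordElem, ptAct_forbidden W lam hT hu, map_zero]
        rfl
      set φ := RingQuot.liftAlgHom F (s := monRel F W) ⟨actHom lam, hrel⟩ with hφ
      have hfact : ∀ b : FreeAlg F m, φ (monAlgPi F W b) = actHom lam b := fun b =>
        RingQuot.liftAlgHom_mkAlgHom_apply F (actHom lam) hrel b
      have : actHom lam a = 0 := by
        rw [← hfact a, ha, map_zero]
      rw [algAct_eq, this]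
      rfl
    · -- cyclicity
      intro v
      choose c hc using hgen
      set w : ℕ → List (Fin m) := fun n => treeWord c 0 n with hw
      set p : ℕ → F := fun n => prodLam lam 0 (w n) with hpdef
      have hp : ∀ n, p n ≠ 0 := fun n => prodLam_treeWord_ne_zero lam c hc 0 n
      refine ⟨v.sum fun n t => (t / p n) • wordElem F (w n), ?_⟩
      have hmap : algAct F lam (v.sum fun n t => (t / p n) • wordElem F (w n)) =
          v.sum fun n t => (t / p n) • ptAct F lam (w n) := by
        rw [algAct_eq, map_finsuppSum]
        rw [Finsupp.sum, Finsupp.sum, Finset.unop_sum]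
        apply Finset.sum_congr rfl
        intro n _
        rw [map_smul, actHom_wordElem]
        simp
      rw [hmap, Finsupp.sum, LinearMap.sum_apply]
      have hterm : ∀ n t, ((t / p n) • ptAct F lam (w n)) (eVec F 0)
          = Finsupp.single n t := by
        intro n t
        rw [LinearMap.smul_apply, ptAct_eVec, smul_smul, div_mul_cancel₀ _ (hp n)]
        rw [show (0 : ℕ) + (w n).length = n by rw [treeWord_length]; omega]
        rw [eVec, Finsupp.smul_single, smul_eq_mul, mul_one]
      calc (∑ n ∈ v.support, ((v n / p n) • ptAct F lam (w n)) (eVec F 0))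
          = ∑ n ∈ v.support, Finsupp.single n (v n) := by
            apply Finset.sum_congr rfl; intro n _; exact hterm n (v n)
        _ = v := by rw [← Finsupp.sum, Finsupp.sum_single v]
end
end

section
/- Let w be a uniformly recurrent right-infinite word over a finite alphabet Σ = {x_1, …, x_m} that is not eventually periodic (equivalently, A_w is a projectively simple monomial algebra not of linear growth). Then A_w admits a faithful point module which is not a monomial point module; that is, there is a faithful point A_w-module P = ⊕_{i≥0} F·e_i with action e_i · x_j = λ_{i,j} e_{i+1} such that for some index i at least two of the scalars λ_{i,1}, …, λ_{i,m} are nonzero. -/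
noncomputable section

open scoped BigOperators

variable (F : Type) [Field F] {m : ℕ}

namespace St2

variable {m : ℕ}

def seg (f : ℕ → Fin m) (i n : ℕ) : List (Fin m) :=
  (List.range n).map fun k => f (i + k)

@[simp] lemma seg_length (f : ℕ → Fin m) (i n : ℕ) : (seg f i n).length = n := by
  simp [seg]

lemma seg_add (f : ℕ → Fin m) (i p q : ℕ) :
    seg f i (p + q) = seg f i p ++ seg f (i + p) q := by
  simp only [seg, List.range_add, List.map_append, List.map_map]
  congr 1
  apply List.map_congr_left; intro k _; simp only [Function.comp]; congr 1; omega

lemma seg_succ (f : ℕ → Fin m) (i n : ℕ) :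
    seg f i (n + 1) = seg f i n ++ [f (i + n)] := by
  rw [seg_add]; simp [seg, List.range_succ]

lemma seg_cons (f : ℕ → Fin m) (i n : ℕ) :
    seg f i (n + 1) = f i :: seg f (i + 1) n := by
  have h : n + 1 = 1 + n := by omega
  rw [h, seg_add]
  have h1 : seg f i 1 = [f i] := by simp [seg, List.range_succ]
  rw [h1]
  simp only [List.singleton_append]

lemma mem_factorsOf_seg (w : ℕ → Fin m) (i n : ℕ) : seg w i n ∈ factorsOf w :=
  ⟨i, by rw [seg_length]; rfl⟩

lemma mem_factorsOf_iff (w : ℕ → Fin m) (u : List (Fin m)) :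
    u ∈ factorsOf w ↔ ∃ i, u = seg w i u.length := Iff.rfl

lemma eq_seg_of_infix {f : ℕ → Fin m} {u : List (Fin m)} {i n : ℕ}
    (h : u <:+: seg f i n) : ∃ k, u = seg f (i + k) u.length := by
  obtain ⟨s, t, hst⟩ := h
  have hlen : n = s.length + (u.length + t.length) := by
    have := congrArg List.length hst
    simp at this; omega
  refine ⟨s.length, ?_⟩
  rw [hlen, seg_add, seg_add] at hst
  have hst' : s ++ (u ++ t)
      = seg f i s.length ++ (seg f (i + s.length) u.length
        ++ seg f (i + s.length + u.length) t.length) := by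
    simp only [List.append_assoc] at hst; exact hst
  have h1 := List.append_inj_right hst' (by simp)
  exact List.append_inj_left h1 (by simp)

lemma factorsOf_infix_closed {w : ℕ → Fin m} {u v : List (Fin m)}
    (h : u <:+: v) (hv : v ∈ factorsOf w) : u ∈ factorsOf w := by
  obtain ⟨i, hv⟩ := hv
  have h' : u <:+: seg w i v.length := by rw [show seg w i v.length = v from hv.symm]; exact h
  obtain ⟨k, hk⟩ := eq_seg_of_infix h'
  exact ⟨i + k, hk⟩


variable {w : ℕ → Fin m}

lemma exists_pos_occ (hur : UniformlyRecurrent w) {u : List (Fin m)}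
    (hu : u ∈ factorsOf w) : ∃ i, u = seg w (i + 1) u.length := by
  obtain ⟨C, hC⟩ := hur u hu
  have hv := hC (seg w 1 C) (mem_factorsOf_seg w 1 C) (seg_length _ _ _)
  obtain ⟨k, hk⟩ := eq_seg_of_infix hv
  exact ⟨k, by rw [Nat.add_comm 1 k] at hk; exact hk⟩

lemma exists_left_ext (hur : UniformlyRecurrent w) {u : List (Fin m)}
    (hu : u ∈ factorsOf w) : ∃ x, x :: u ∈ factorsOf w := by
  obtain ⟨i, hi⟩ := exists_pos_occ hur hu
  refine ⟨w i, ?_⟩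
  have h1 : w i :: u = seg w i (u.length + 1) := by rw [seg_cons, ← hi]
  rw [h1]; exact mem_factorsOf_seg w i _

lemma exists_left_special (hur : UniformlyRecurrent w) (hnp : ¬ EventuallyPeriodic w)
    (n : ℕ) :
    ∃ u, u ∈ factorsOf w ∧ u.length = n ∧
      ∃ x y : Fin m, x ≠ y ∧ x :: u ∈ factorsOf w ∧ y :: u ∈ factorsOf w := by
  by_contra hcon
  push_neg at hcon
  apply hnp
  have huniq : ∀ u ∈ factorsOf w, u.length = n → ∀ x y : Fin m,
      x :: u ∈ factorsOf w → y :: u ∈ factorsOf w → x = y := by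
    intro u hu hlen x y hx hy
    by_contra hxy
    exact hcon u hu hlen x y hxy hx hy
  -- finite types of factors of a given length
  have hfin : ∀ k : ℕ, Finite {u : List (Fin m) // u ∈ factorsOf w ∧ u.length = k} := by
    intro k
    apply Finite.of_injective
      (fun u : {u : List (Fin m) // u ∈ factorsOf w ∧ u.length = k} =>
        (fun j : Fin k => u.1.get (Fin.cast u.2.2.symm j)))
    intro u v huv
    apply Subtype.ext
    apply List.ext_get (by rw [u.2.2, v.2.2])
    intro i h1 h2
    have := congrFun huv ⟨i, by rw [← u.2.2]; exact h1⟩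
    simpa [Fin.cast] using this
  haveI := hfin n
  haveI := hfin (n + 1)
  -- the two restriction maps
  let L : {u : List (Fin m) // u ∈ factorsOf w ∧ u.length = n + 1} →
      {u : List (Fin m) // u ∈ factorsOf w ∧ u.length = n} :=
    fun u => ⟨u.1.tail, factorsOf_infix_closed (u.1.tail_suffix).isInfix u.2.1,
      by rw [List.length_tail, u.2.2]; omega⟩
  let R : {u : List (Fin m) // u ∈ factorsOf w ∧ u.length = n + 1} →
      {u : List (Fin m) // u ∈ factorsOf w ∧ u.length = n} :=
    fun u => ⟨u.1.dropLast, factorsOf_infix_closed (u.1.dropLast_prefix).isInfix u.2.1,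
      by rw [List.length_dropLast, u.2.2]; omega⟩
  have hLinj : Function.Injective L := by
    intro u v huv
    have htail : u.1.tail = v.1.tail := congrArg Subtype.val huv
    have hu0 : u.1 ≠ [] := by intro h; have := u.2.2; rw [h] at this; simp at this
    have hv0 : v.1 ≠ [] := by intro h; have := v.2.2; rw [h] at this; simp at this
    have hu1 : u.1 = u.1.head hu0 :: u.1.tail := (List.cons_head_tail hu0).symm
    have hv1 : v.1 = v.1.head hv0 :: v.1.tail := (List.cons_head_tail hv0).symm
    have hmemt : u.1.tail ∈ factorsOf w := (L u).2.1
    have hlent : u.1.tail.length = n := (L u).2.2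
    have heq : u.1.head hu0 = v.1.head hv0 := by
      apply huniq u.1.tail hmemt hlent
      · rw [← hu1]; exact u.2.1
      · rw [htail, ← hv1]; exact v.2.1
    apply Subtype.ext
    rw [hu1, hv1, htail, heq]
  have hLsurj : Function.Surjective L := by
    intro u
    obtain ⟨x, hx⟩ := exists_left_ext hur u.2.1
    exact ⟨⟨x :: u.1, hx, by simp [u.2.2]⟩, Subtype.ext rfl⟩
  have hRsurj : Function.Surjective R := by
    intro u
    obtain ⟨i, hi⟩ := u.2.1
    have hu : u.1 = seg w i n := by rw [u.2.2] at hi; exact hi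
    refine ⟨⟨seg w i (n+1), mem_factorsOf_seg w i _, seg_length _ _ _⟩, Subtype.ext ?_⟩
    show (seg w i (n+1)).dropLast = u.1
    rw [seg_succ, List.dropLast_concat, hu]
  have hcard : Nat.card {u : List (Fin m) // u ∈ factorsOf w ∧ u.length = n + 1}
      = Nat.card {u : List (Fin m) // u ∈ factorsOf w ∧ u.length = n} :=
    le_antisymm (Nat.card_le_card_of_injective L hLinj)
      (Nat.card_le_card_of_surjective R hRsurj)
  have hRinj : Function.Injective R :=
    ((Nat.bijective_iff_surjective_and_card R).2 ⟨hRsurj, hcard⟩).1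
  -- unique right extensions
  have Runi : ∀ (u : List (Fin m)) (x y : Fin m), u.length = n →
      u ++ [x] ∈ factorsOf w → u ++ [y] ∈ factorsOf w → x = y := by
    intro u x y hlen hx hy
    have h1 : R ⟨u ++ [x], hx, by simp [hlen]⟩ = R ⟨u ++ [y], hy, by simp [hlen]⟩ := by
      apply Subtype.ext
      show (u ++ [x]).dropLast = (u ++ [y]).dropLast
      rw [List.dropLast_concat, List.dropLast_concat]
    have h2 := congrArg Subtype.val (hRinj h1)
    simp at h2
    exact h2
  -- one step of forward determinism
  have hstep : ∀ t s : ℕ, seg w t n = seg w s n →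
      w (t + n) = w (s + n) ∧ seg w (t + 1) n = seg w (s + 1) n := by
    intro t s hts
    have hlast : w (t + n) = w (s + n) := by
      apply Runi (seg w t n) _ _ (seg_length _ _ _)
      · rw [← seg_succ]; exact mem_factorsOf_seg w t _
      · rw [hts, ← seg_succ]; exact mem_factorsOf_seg w s _
    constructor
    · exact hlast
    · have hfull : seg w t (n + 1) = seg w s (n + 1) := by
        rw [seg_succ, seg_succ, hts, hlast]
      rw [seg_cons, seg_cons] at hfull
      exact List.tail_eq_of_cons_eq hfull
  -- pigeonhole
  obtain ⟨i, j, hij, hseg⟩ := Finite.exists_ne_map_eq_of_infinite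
    (fun i : ℕ => (⟨seg w i n, mem_factorsOf_seg w i n, seg_length _ _ _⟩ :
      {u : List (Fin m) // u ∈ factorsOf w ∧ u.length = n}))
  have hsegeq : seg w i n = seg w j n := congrArg Subtype.val hseg
  -- wlog i < j
  have key : ∀ i j : ℕ, i < j → seg w i n = seg w j n → EventuallyPeriodic w := by
    intro i j hlt h0
    have hprop : ∀ k : ℕ, seg w (i + k) n = seg w (j + k) n := by
      intro k
      induction k with
      | zero => exact h0
      | succ k ih => exact (hstep _ _ ih).2
    refine ⟨j - i, by omega, i + n, ?_⟩
    intro t ht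
    have hk := (hstep (i + (t - i - n)) (j + (t - i - n)) (hprop _)).1
    have e1 : i + (t - i - n) + n = t := by omega
    have e2 : j + (t - i - n) + n = t + (j - i) := by omega
    rw [e1, e2] at hk
    exact hk.symm
  rcases Nat.lt_or_ge i j with hlt | hge
  · exact key i j hlt hsegeq
  · exact key j i (by omega) hsegeq.symm

lemma seg_prefix_seg (c : ℕ → Fin m) {a b : ℕ} (h : a ≤ b) :
    seg c 0 a <+: seg c 0 b := by
  refine ⟨seg c (0 + a) (b - a), ?_⟩
  rw [← seg_add]
  congr 1
  omega

lemma exists_special_word (hur : UniformlyRecurrent w) (hnp : ¬ EventuallyPeriodic w) :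
    ∃ (c : ℕ → Fin m) (A B : Fin m), A ≠ B ∧
      (∀ n, A :: seg c 0 n ∈ factorsOf w) ∧ (∀ n, B :: seg c 0 n ∈ factorsOf w) := by
  classical
  -- left special factors
  let LS : List (Fin m) → Prop := fun u => u ∈ factorsOf w ∧
    ∃ x y : Fin m, x ≠ y ∧ x :: u ∈ factorsOf w ∧ y :: u ∈ factorsOf w
  have hpc : ∀ {u p : List (Fin m)}, LS u → p <+: u → LS p := by
    intro u p hu hp
    obtain ⟨hu1, x, y, hxy, hx, hy⟩ := hu
    refine ⟨factorsOf_infix_closed hp.isInfix hu1, x, y, hxy, ?_, ?_⟩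
    · exact factorsOf_infix_closed ((List.cons_prefix_cons.2 ⟨rfl, hp⟩).isInfix) hx
    · exact factorsOf_infix_closed ((List.cons_prefix_cons.2 ⟨rfl, hp⟩).isInfix) hy
  let Inf : List (Fin m) → Prop := fun p => ∀ N : ℕ, ∃ u, LS u ∧ p <+: u ∧ N ≤ u.length
  have inf_nil : Inf [] := by
    intro N
    obtain ⟨u, hu, hlen, x, y, hxy, hx, hy⟩ := exists_left_special hur hnp N
    exact ⟨u, ⟨hu, x, y, hxy, hx, hy⟩, List.nil_prefix, by omega⟩
  have hstep : ∀ p : List (Fin m), Inf p → ∃ x : Fin m, Inf (p ++ [x]) := by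
    intro p hp
    by_contra hno
    have hno' : ∀ x : Fin m, ∃ N : ℕ, ∀ u, LS u → (p ++ [x]) <+: u → u.length < N := by
      intro x
      have hx : ¬ (∀ N : ℕ, ∃ u, LS u ∧ (p ++ [x]) <+: u ∧ N ≤ u.length) :=
        fun h => hno ⟨x, h⟩
      push_neg at hx
      exact hx
    choose N hN using hno'
    set M := Finset.univ.sup N with hM
    obtain ⟨u, hLS, hpre, hlen⟩ := hp (M + p.length + 1)
    obtain ⟨r, hr⟩ := hpre
    have hrne : r ≠ [] := by
      intro h
      rw [h, List.append_nil] at hr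
      have := congrArg List.length hr
      omega
    have hpx : p ++ [r.head hrne] <+: u := by
      refine ⟨r.tail, ?_⟩
      rw [List.append_assoc, List.singleton_append, List.cons_head_tail hrne]
      exact hr
    have h1 := hN (r.head hrne) u hLS hpx
    have h2 : N (r.head hrne) ≤ M := Finset.le_sup (Finset.mem_univ _)
    omega
  -- build the infinite left special word by recursion
  let f : ℕ → {p : List (Fin m) // Inf p} := fun n => Nat.rec ⟨[], inf_nil⟩
    (fun _ ih => ⟨ih.1 ++ [Classical.choose (hstep ih.1 ih.2)],
      Classical.choose_spec (hstep ih.1 ih.2)⟩) n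
  let c : ℕ → Fin m := fun i => Classical.choose (hstep (f i).1 (f i).2)
  have hf : ∀ n, (f (n + 1)).1 = (f n).1 ++ [c n] := fun n => rfl
  have hfseg : ∀ n, (f n).1 = seg c 0 n := by
    intro n
    induction n with
    | zero => rfl
    | succ n ih => rw [hf, ih, seg_succ]; simp
  have hLSpre : ∀ n, LS (seg c 0 n) := by
    intro n
    obtain ⟨u, hu, hpre, -⟩ := (hfseg n ▸ (f n).2) 0
    exact hpc hu hpre
  choose X Y hXY hX hY using fun n => (hLSpre n).2
  obtain ⟨⟨A, B⟩, hAB⟩ := Finite.exists_infinite_fiber (fun n : ℕ => (X n, Y n))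
  have hAB' : Set.Infinite ((fun n : ℕ => (X n, Y n)) ⁻¹' {(A, B)}) :=
    Set.infinite_coe_iff.1 hAB
  have hbig : ∀ n : ℕ, ∃ n', n ≤ n' ∧ X n' = A ∧ Y n' = B := by
    intro n
    obtain ⟨n', hn', hgt⟩ := hAB'.exists_gt n
    have : (X n', Y n') = (A, B) := hn'
    exact ⟨n', le_of_lt hgt, congrArg Prod.fst this, congrArg Prod.snd this⟩
  obtain ⟨n0, -, hXA, hYB⟩ := hbig 0
  refine ⟨c, A, B, by rw [← hXA, ← hYB]; exact hXY n0, ?_, ?_⟩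
  · intro n
    obtain ⟨n', hn, hXA', hYB'⟩ := hbig n
    have hpre : A :: seg c 0 n <+: A :: seg c 0 n' :=
      List.cons_prefix_cons.2 ⟨rfl, seg_prefix_seg c hn⟩
    exact factorsOf_infix_closed hpre.isInfix (hXA' ▸ hX n')
  · intro n
    obtain ⟨n', hn, hXA', hYB'⟩ := hbig n
    have hpre : B :: seg c 0 n <+: B :: seg c 0 n' :=
      List.cons_prefix_cons.2 ⟨rfl, seg_prefix_seg c hn⟩
    exact factorsOf_infix_closed hpre.isInfix (hYB' ▸ hY n')

end St2

namespace St2Alg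

open St2

variable {m : ℕ} (F : Type) [Field F]

/-- The product of the scalars by which a word acts. -/
def P (lam : ℕ → Fin m → F) : ℕ → List (Fin m) → F
  | _, [] => 1
  | i, j :: u => lam i j * P lam (i + 1) u

lemma ptAct_single (lam : ℕ → Fin m → F) (u : List (Fin m)) (i : ℕ) (t : F) :
    ptAct F lam u (Finsupp.single i t)
      = P F lam i u • Finsupp.single (i + u.length) t := by
  induction u generalizing i with
  | nil => simp [ptAct, P]
  | cons j u ih =>
    have harg : (Finsupp.lsum F (fun i => lam i j • Finsupp.lsingle (i + 1) :
          ℕ → F →ₗ[F] (ℕ →₀ F)))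
        (Finsupp.single i t) = lam i j • Finsupp.single (i + 1) t := by
      simp only [Finsupp.lsum_single, LinearMap.smul_apply, Finsupp.lsingle_apply]
    rw [ptAct, LinearMap.comp_apply, harg, map_smul, ih, smul_smul]
    have hlen : i + 1 + u.length = i + (j :: u).length := by simp; omega
    rw [hlen]
    congr 1

lemma ptAct_eq_zero {lam : ℕ → Fin m → F} {u : List (Fin m)}
    (h : ∀ i, P F lam i u = 0) : ptAct F lam u = 0 := by
  apply Finsupp.lhom_ext
  intro i t
  rw [ptAct_single, h i, zero_smul, LinearMap.zero_apply]

/-- The action as an algebra homomorphism into the opposite of the endomorphism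
algebra. -/
def phi (lam : ℕ → Fin m → F) :
    FreeAlg F m →ₐ[F] (Module.End F (ℕ →₀ F))ᵐᵒᵖ :=
  MonoidAlgebra.lift F _ (FreeMonoid (Fin m))
    (FreeMonoid.lift fun j => MulOpposite.op
      ((Finsupp.lsum F fun i => lam i j • Finsupp.lsingle (i + 1)) :
        Module.End F (ℕ →₀ F)))

lemma freeLift_word (lam : ℕ → Fin m → F) (u : List (Fin m)) :
    (FreeMonoid.lift fun j => MulOpposite.op
      ((Finsupp.lsum F fun i => lam i j • Finsupp.lsingle (i + 1)) :
        Module.End F (ℕ →₀ F))) (FreeMonoid.ofList u)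
      = MulOpposite.op (ptAct F lam u) := by
  induction u with
  | nil =>
    rw [show FreeMonoid.ofList ([] : List (Fin m)) = 1 from rfl, map_one]
    rfl
  | cons j u ih =>
    rw [FreeMonoid.ofList_cons, map_mul, FreeMonoid.lift_eval_of, ih,
      ← MulOpposite.op_mul]
    rfl

lemma phi_word (lam : ℕ → Fin m → F) (u : List (Fin m)) :
    phi F lam (wordElem F u) = MulOpposite.op (ptAct F lam u) := by
  rw [wordElem, phi, MonoidAlgebra.lift_of]
  exact freeLift_word F lam u

lemma algAct_zero (lam : ℕ → Fin m → F) : algAct F lam 0 = 0 := by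
  rw [algAct, MonoidAlgebra.coeff_zero, Finsupp.sum_zero_index]

lemma algAct_add (lam : ℕ → Fin m → F) (a b : FreeAlg F m) :
    algAct F lam (a + b) = algAct F lam a + algAct F lam b := by
  rw [algAct, algAct, algAct, MonoidAlgebra.coeff_add]
  exact Finsupp.sum_add_index' (fun _ => zero_smul _ _) (fun _ c d => add_smul c d _)

lemma algAct_single (lam : ℕ → Fin m → F) (x : FreeMonoid (Fin m)) (cc : F) :
    algAct F lam (MonoidAlgebra.single x cc) = cc • ptAct F lam (FreeMonoid.toList x) := by
  rw [algAct, MonoidAlgebra.coeff_single, Finsupp.sum_single_index]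
  exact zero_smul _ _

lemma single_eq_smul_wordElem (x : FreeMonoid (Fin m)) (cc : F) :
    (MonoidAlgebra.single x cc : FreeAlg F m) = cc • wordElem F (FreeMonoid.toList x) := by
  rw [wordElem, FreeMonoid.ofList_toList]
  rw [show MonoidAlgebra.of F (FreeMonoid (Fin m)) x = MonoidAlgebra.single x 1 from MonoidAlgebra.of_apply _ _ _]
  rw [MonoidAlgebra.smul_single', mul_one]

lemma phi_eq (lam : ℕ → Fin m → F) (a : FreeAlg F m) :
    phi F lam a = MulOpposite.op (algAct F lam a) := by
  induction a using MonoidAlgebra.induction with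
  | zero => rw [map_zero, algAct_zero]; rfl
  | single_add x cc f hx hcc ih =>
    rw [map_add, algAct_add, ih, MulOpposite.op_add]
    congr 1
    rw [algAct_single, single_eq_smul_wordElem, map_smul, phi_word,
      MulOpposite.op_smul]

end St2Alg

namespace St2

variable {m : ℕ} (F : Type) [Field F]

/-- The scalar data for the point module built from the left special word `c`
with distinct left extensions `A`, `B`. -/
def lamOf (c : ℕ → Fin m) (A B : Fin m) : ℕ → Fin m → F
  | 0, j => if j = A ∨ j = B then 1 else 0
  | (i + 1), j => if j = c i then 1 else 0

variable {c : ℕ → Fin m} {A B : Fin m}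

lemma P_seg_one (c : ℕ → Fin m) (A B : Fin m) (t d : ℕ) :
    St2Alg.P F (lamOf F c A B) (t + 1) (seg c t d) = 1 := by
  induction d generalizing t with
  | zero => simp [seg, St2Alg.P]
  | succ d ih =>
    rw [seg_cons]
    show lamOf F c A B (t + 1) (c t)
      * St2Alg.P F (lamOf F c A B) (t + 2) (seg c (t + 1) d) = 1
    rw [show lamOf F c A B (t + 1) (c t) = if c t = c t then 1 else 0 from rfl]
    rw [if_pos rfl, one_mul]
    exact ih (t + 1)

lemma eq_seg_of_P_ne {u : List (Fin m)} {t : ℕ}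
    (h : St2Alg.P F (lamOf F c A B) (t + 1) u ≠ 0) : u = seg c t u.length := by
  induction u generalizing t with
  | nil => simp [seg]
  | cons j v ih =>
    rw [show St2Alg.P F (lamOf F c A B) (t + 1) (j :: v)
      = lamOf F c A B (t + 1) j * St2Alg.P F (lamOf F c A B) (t + 2) v from rfl] at h
    obtain ⟨h1, h2⟩ := mul_ne_zero_iff.1 h
    have hj : j = c t := by
      by_contra hne
      apply h1
      rw [show lamOf F c A B (t + 1) j = if j = c t then 1 else 0 from rfl]
      exact if_neg hne
    have hv := ih h2
    rw [List.length_cons, seg_cons, ← hv, hj]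

lemma P_zero_shape {u : List (Fin m)}
    (h : St2Alg.P F (lamOf F c A B) 0 u ≠ 0) :
    u = [] ∨ ∃ x, (x = A ∨ x = B) ∧ ∃ d, u = x :: seg c 0 d := by
  cases u with
  | nil => exact Or.inl rfl
  | cons j v =>
    right
    rw [show St2Alg.P F (lamOf F c A B) 0 (j :: v)
      = lamOf F c A B 0 j * St2Alg.P F (lamOf F c A B) 1 v from rfl] at h
    obtain ⟨h1, h2⟩ := mul_ne_zero_iff.1 h
    have hj : j = A ∨ j = B := by
      by_contra hne
      apply h1
      rw [show lamOf F c A B 0 j = if j = A ∨ j = B then 1 else 0 from rfl]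
      exact if_neg hne
    exact ⟨j, hj, v.length, by rw [← eq_seg_of_P_ne F (t := 0) h2]⟩

/-- The canonical word of length `n` acting with scalar `1` from position `0`. -/
def pref (c : ℕ → Fin m) (A : Fin m) : ℕ → List (Fin m)
  | 0 => []
  | n + 1 => A :: seg c 0 n

lemma pref_length (c : ℕ → Fin m) (A : Fin m) (n : ℕ) : (pref c A n).length = n := by
  cases n with
  | zero => rfl
  | succ n => simp [pref]

lemma P_pref (c : ℕ → Fin m) (A B : Fin m) (n : ℕ) :
    St2Alg.P F (lamOf F c A B) 0 (pref c A n) = 1 := by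
  cases n with
  | zero => rfl
  | succ n =>
    rw [show pref c A (n + 1) = A :: seg c 0 n from rfl]
    rw [show St2Alg.P F (lamOf F c A B) 0 (A :: seg c 0 n)
      = lamOf F c A B 0 A * St2Alg.P F (lamOf F c A B) 1 (seg c 0 n) from rfl]
    rw [show lamOf F c A B 0 A = if A = A ∨ A = B then 1 else 0 from rfl]
    rw [if_pos (Or.inl rfl), one_mul]
    exact P_seg_one F c A B 0 n

variable {w : ℕ → Fin m}

lemma cseg_mem (hA : ∀ n, A :: seg c 0 n ∈ factorsOf w) (t d : ℕ) :
    seg c t d ∈ factorsOf w := by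
  have h0 : seg c 0 (t + d) ∈ factorsOf w :=
    factorsOf_infix_closed (List.suffix_cons A _).isInfix (hA (t + d))
  refine factorsOf_infix_closed ⟨seg c 0 t, [], ?_⟩ h0
  have hadd := seg_add c 0 t d
  rw [Nat.zero_add] at hadd
  rw [List.append_nil, ← hadd]

lemma occ (hur : UniformlyRecurrent w) (hA : ∀ n, A :: seg c 0 n ∈ factorsOf w)
    (u : List (Fin m)) (hu : u ∈ factorsOf w) : ∃ t, u = seg c t u.length := by
  obtain ⟨C, hC⟩ := hur u hu
  have hinf := hC (seg c 0 C) (cseg_mem hA 0 C) (seg_length _ _ _)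
  obtain ⟨k, hk⟩ := eq_seg_of_infix hinf
  exact ⟨k, by rwa [Nat.zero_add] at hk⟩

lemma forb (hA : ∀ n, A :: seg c 0 n ∈ factorsOf w)
    (hB : ∀ n, B :: seg c 0 n ∈ factorsOf w)
    {u : List (Fin m)} (hu : u ∉ factorsOf w) (i : ℕ) :
    St2Alg.P F (lamOf F c A B) i u = 0 := by
  by_contra h
  apply hu
  cases i with
  | zero =>
    rcases P_zero_shape F h with rfl | ⟨x, hx, d, rfl⟩
    · exact ⟨0, rfl⟩
    · rcases hx with rfl | rfl
      · exact hA d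
      · exact hB d
  | succ t =>
    rw [eq_seg_of_P_ne F h]
    exact cseg_mem hA t u.length

end St2

/-- If `w` is a uniformly recurrent right-infinite word which is
not eventually periodic, then the monomial algebra `A_w` admits a faithful point
module which is not monomial: for some index `i`, at least two of the scalars
`λ_{i,1},…,λ_{i,m}` are nonzero. -/
theorem statement2 (F : Type) [Field F] (m : ℕ) (w : ℕ → Fin m)
    (hur : UniformlyRecurrent w) (hnp : ¬ EventuallyPeriodic w) :
    ∃ lam : ℕ → Fin m → F,
      IsPointModule F ((factorsOf w)ᶜ) lam ∧
      IsFaithfulPM F ((factorsOf w)ᶜ) lam ∧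
      ∃ (i : ℕ) (j₁ j₂ : Fin m), j₁ ≠ j₂ ∧ lam i j₁ ≠ 0 ∧ lam i j₂ ≠ 0 := by
  classical
  obtain ⟨c, A, B, hAB, hA, hB⟩ := St2.exists_special_word hur hnp
  set lam := St2.lamOf F c A B with hlam
  have hforb : ∀ u : List (Fin m), u ∉ factorsOf w → ptAct F lam u = 0 := by
    intro u hu
    exact St2Alg.ptAct_eq_zero F fun i => St2.forb F hA hB hu i
  have hresp : ∀ ⦃x y : FreeAlg F m⦄, monRel F ((factorsOf w)ᶜ) x y →
      St2Alg.phi F lam x = St2Alg.phi F lam y := by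
    rintro x y ⟨⟨u, hu, rfl⟩, rfl⟩
    rw [map_zero, St2Alg.phi_word, hforb u hu, MulOpposite.op_zero]
  refine ⟨lam, ⟨?_, ?_⟩, ?_, 0, A, B, hAB, ?_, ?_⟩
  · -- welldef
    intro a ha
    have h1 : St2Alg.phi F lam a
        = RingQuot.liftAlgHom F ⟨St2Alg.phi F lam, hresp⟩ (monAlgPi F ((factorsOf w)ᶜ) a) := by
      rw [monAlgPi, RingQuot.liftAlgHom_mkAlgHom_apply]
    rw [ha, map_zero, St2Alg.phi_eq] at h1
    exact (MulOpposite.op_eq_zero_iff _).1 h1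
  · -- cyclic
    intro v
    induction v using Finsupp.induction with
    | zero =>
      exact ⟨0, by rw [St2Alg.algAct_zero]; rfl⟩
    | single_add n tv vrest hn htv ih =>
      obtain ⟨a0, ha0⟩ := ih
      have hsw : (MonoidAlgebra.single (FreeMonoid.ofList (St2.pref c A n)) tv : FreeAlg F m)
          = tv • wordElem F (St2.pref c A n) :=
        St2Alg.single_eq_smul_wordElem F _ tv
      refine ⟨tv • wordElem F (St2.pref c A n) + a0, ?_⟩
      rw [← hsw, St2Alg.algAct_add, LinearMap.add_apply, ha0, St2Alg.algAct_single,
        FreeMonoid.toList_ofList, LinearMap.smul_apply]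
      rw [show eVec F 0 = Finsupp.single 0 (1:F) from rfl, St2Alg.ptAct_single,
        St2.P_pref, St2.pref_length, one_smul, Nat.zero_add, Finsupp.smul_single', mul_one]
  · -- faithful
    intro a ha
    have hkey : ∀ x : FreeMonoid (Fin m), FreeMonoid.toList x ∈ factorsOf w → a.coeff x = 0 := by
      intro x hx
      obtain ⟨t, ht⟩ := St2.occ hur hA (FreeMonoid.toList x) hx
      set d := (FreeMonoid.toList x).length with hd
      have e1 : algAct F lam a (Finsupp.single (t + 1) (1:F))
          = ∑ y ∈ a.coeff.support, (a.coeff y • ptAct F lam (FreeMonoid.toList y))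
              (Finsupp.single (t + 1) (1:F)) := by
        rw [algAct, Finsupp.sum]
        exact LinearMap.sum_apply _ _ _
      have e3 : (algAct F lam a (Finsupp.single (t + 1) (1:F))) (t + 1 + d)
          = ∑ y ∈ a.coeff.support, (a.coeff y * St2Alg.P F lam (t + 1) (FreeMonoid.toList y))
              * (Finsupp.single (t + 1 + (FreeMonoid.toList y).length) (1:F)) (t + 1 + d) := by
        rw [e1, Finsupp.finset_sum_apply]
        apply Finset.sum_congr rfl
        intro y _
        rw [LinearMap.smul_apply, St2Alg.ptAct_single, smul_smul, Finsupp.smul_apply,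
          smul_eq_mul]
      have h1 : ∑ y ∈ a.coeff.support, (a.coeff y * St2Alg.P F lam (t + 1) (FreeMonoid.toList y))
          * (Finsupp.single (t + 1 + (FreeMonoid.toList y).length) (1:F)) (t + 1 + d) = 0 := by
        rw [← e3, ha]
        rfl
      have hterm : ∀ y ∈ a.coeff.support, y ≠ x →
          (a.coeff y * St2Alg.P F lam (t + 1) (FreeMonoid.toList y))
            * (Finsupp.single (t + 1 + (FreeMonoid.toList y).length) (1:F)) (t + 1 + d) = 0 := by
        intro y _ hyx
        by_cases hlen : (FreeMonoid.toList y).length = d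
        · have hP : St2Alg.P F lam (t + 1) (FreeMonoid.toList y) = 0 := by
            by_contra hP
            apply hyx
            have h5 := St2.eq_seg_of_P_ne F hP
            have h6 : FreeMonoid.toList y = FreeMonoid.toList x := by
              rw [h5, hlen, hd, ← ht]
            calc y = FreeMonoid.ofList (FreeMonoid.toList y) := rfl
              _ = FreeMonoid.ofList (FreeMonoid.toList x) := by rw [h6]
              _ = x := rfl
          rw [hP, mul_zero, zero_mul]
        · rw [Finsupp.single_eq_of_ne (by omega), mul_zero]
      by_cases hxs : x ∈ a.coeff.support
      · have h2 := Finset.sum_eq_single_of_mem x hxs hterm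
        rw [h2] at h1
        have h3 : St2Alg.P F lam (t + 1) (FreeMonoid.toList x) = 1 := by
          rw [ht]
          exact St2.P_seg_one F c A B t d
        rw [h3, mul_one, Finsupp.single_eq_same, mul_one] at h1
        exact h1
      · exact Finsupp.notMem_support_iff.1 hxs
    have expand : a = Finsupp.sum a.coeff (fun x cc => MonoidAlgebra.single x cc) :=
      (MonoidAlgebra.sum_coeff_single a).symm
    rw [expand, map_finsuppSum, Finsupp.sum]
    apply Finset.sum_eq_zero
    intro x hxs
    by_cases hx : FreeMonoid.toList x ∈ factorsOf w
    · rw [hkey x hx, MonoidAlgebra.single_zero, map_zero]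
    · rw [St2Alg.single_eq_smul_wordElem, map_smul]
      have hrel : monRel F ((factorsOf w)ᶜ) (wordElem F (FreeMonoid.toList x)) 0 :=
        ⟨⟨FreeMonoid.toList x, hx, rfl⟩, rfl⟩
      have h7 : monAlgPi F ((factorsOf w)ᶜ) (wordElem F (FreeMonoid.toList x))
          = monAlgPi F ((factorsOf w)ᶜ) 0 := by
        rw [monAlgPi]
        exact RingQuot.mkAlgHom_rel F hrel
      rw [h7, map_zero, smul_zero]
  · -- lam 0 A ≠ 0
    rw [hlam, show St2.lamOf F c A B 0 A = if A = A ∨ A = B then 1 else 0 from rfl,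
      if_pos (Or.inl rfl)]
    exact one_ne_zero
  · -- lam 0 B ≠ 0
    rw [hlam, show St2.lamOf F c A B 0 B = if B = A ∨ B = B then 1 else 0 from rfl,
      if_pos (Or.inr rfl)]
    exact one_ne_zero
end
end

section
/- Let A be a connected ℕ-graded F-algebra with finite-dimensional homogeneous components that is generated in degree 1. If A has exponential growth, then the quotient A/pro(A) also has exponential growth. Equivalently, if limsup_n (dim_F ⊕_{i≤n} (A/pro(A))_i)^{1/n} ≤ 1 then limsup_n (dim_F ⊕_{i≤n} A_i)^{1/n} ≤ 1. -/
noncomputable section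

open scoped BigOperators

variable (F : Type) [Field F] {m : ℕ}

/-- The right prolongable radical of a graded algebra `A` with grading `𝒜`:
the set of `f ∈ A` with `f · A_d = 0` for some `d ≥ 1`. -/
def proSet (A : Type) [Ring A] [Algebra F A] (𝒜 : ℕ → Submodule F A) : Set A :=
  { f | ∃ d : ℕ, 1 ≤ d ∧ ∀ g ∈ 𝒜 d, f * g = 0 }

/-- The left prolongable radical of a graded algebra `A` with grading `𝒜`:
the set of `f ∈ A` with `A_d · f = 0` for some `d ≥ 1`. -/
def proSetLeft (A : Type) [Ring A] [Algebra F A] (𝒜 : ℕ → Submodule F A) : Set A :=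
  { f | ∃ d : ℕ, 1 ≤ d ∧ ∀ g ∈ 𝒜 d, g * f = 0 }

/-- A monomial algebra is (right) prolongable if every nonzero monomial has a
nonzero proper right prolongation. -/
def Prolongable (W : Set (List (Fin m))) : Prop :=
  ∀ u : List (Fin m), mono F W u ≠ 0 → ∃ v : List (Fin m), v ≠ [] ∧ mono F W (u ++ v) ≠ 0


section AuxStatement8

variable {K : Type} [Field K] {A : Type} [Ring A] [Algebra K A]
variable (𝒜 : ℕ → Submodule K A)

theorem aux_grading_mul (hconn : 𝒜 0 = Submodule.span K {1})
    (hgen : ∀ n : ℕ, 𝒜 (n + 1) = 𝒜 1 * 𝒜 n ∧ 𝒜 (n + 1) = 𝒜 n * 𝒜 1) :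
    ∀ n m : ℕ, 𝒜 (n + m) = 𝒜 n * 𝒜 m := by
  intro n m
  induction m with
  | zero => rw [Nat.add_zero, hconn, ← Submodule.one_eq_span, mul_one]
  | succ m ih =>
    rw [← Nat.add_assoc, (hgen (n + m)).2, ih, mul_assoc, ← (hgen m).2]

theorem aux_kills_mono (hconn : 𝒜 0 = Submodule.span K {1})
    (hgen : ∀ n : ℕ, 𝒜 (n + 1) = 𝒜 1 * 𝒜 n ∧ 𝒜 (n + 1) = 𝒜 n * 𝒜 1)
    {f : A} {d d' : ℕ} (hdd' : d ≤ d')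
    (hf : ∀ g ∈ 𝒜 d, f * g = 0) : ∀ g ∈ 𝒜 d', f * g = 0 := by
  intro g hg
  obtain ⟨e, rfl⟩ := Nat.exists_eq_add_of_le hdd'
  rw [aux_grading_mul 𝒜 hconn hgen d e] at hg
  refine Submodule.mul_induction_on hg (fun a ha b _ => ?_) (fun x y hx hy => ?_)
  · rw [← mul_assoc, hf a ha, zero_mul]
  · rw [mul_add, hx, hy, add_zero]

theorem aux_span_kills (hconn : 𝒜 0 = Submodule.span K {1})
    (hgen : ∀ n : ℕ, 𝒜 (n + 1) = 𝒜 1 * 𝒜 n ∧ 𝒜 (n + 1) = 𝒜 n * 𝒜 1)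
    {f : A} (hf : f ∈ Submodule.span K (proSet K A 𝒜)) :
    ∃ d : ℕ, 1 ≤ d ∧ ∀ g ∈ 𝒜 d, f * g = 0 := by
  induction hf using Submodule.span_induction with
  | mem x hx => exact hx
  | zero => exact ⟨1, le_refl 1, fun g _ => zero_mul g⟩
  | add x y _ _ ihx ihy =>
    obtain ⟨d1, hd1, h1⟩ := ihx
    obtain ⟨d2, hd2, h2⟩ := ihy
    refine ⟨max d1 d2, le_trans hd1 (le_max_left _ _), fun g hg => ?_⟩
    rw [add_mul, aux_kills_mono 𝒜 hconn hgen (le_max_left d1 d2) h1 g hg,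
      aux_kills_mono 𝒜 hconn hgen (le_max_right d1 d2) h2 g hg, add_zero]
  | smul c x _ ihx =>
    obtain ⟨d, hd, h⟩ := ihx
    exact ⟨d, hd, fun g hg => by rw [smul_mul_assoc, h g hg, smul_zero]⟩

theorem aux_findD (hconn : 𝒜 0 = Submodule.span K {1})
    (hgen : ∀ n : ℕ, 𝒜 (n + 1) = 𝒜 1 * 𝒜 n ∧ 𝒜 (n + 1) = 𝒜 n * 𝒜 1)
    (hfin : ∀ d : ℕ, Module.Finite K (𝒜 d)) (n : ℕ) :
    ∃ D : ℕ, 1 ≤ D ∧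
      ∀ f ∈ Submodule.span K (proSet K A 𝒜) ⊓ 𝒜 n, ∀ g ∈ 𝒜 D, f * g = 0 := by
  classical
  haveI := hfin n
  haveI : Module.Finite K ↥(Submodule.span K (proSet K A 𝒜) ⊓ 𝒜 n) :=
    Submodule.finiteDimensional_of_le (inf_le_right)
  obtain ⟨S, hS⟩ : (Submodule.span K (proSet K A 𝒜) ⊓ 𝒜 n).FG :=
    Module.Finite.iff_fg.mp inferInstance
  have hmem : ∀ s : {x // x ∈ S}, ∃ d : ℕ, 1 ≤ d ∧ ∀ g ∈ 𝒜 d, (s : A) * g = 0 := by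
    intro s
    have hs : (s : A) ∈ Submodule.span K (proSet K A 𝒜) ⊓ 𝒜 n := by
      rw [← hS]; exact Submodule.subset_span s.2
    exact aux_span_kills 𝒜 hconn hgen hs.1
  choose dfun hd1 hd2 using hmem
  refine ⟨max 1 (Finset.univ.sup dfun), le_max_left _ _, fun f hf => ?_⟩
  rw [← hS] at hf
  induction hf using Submodule.span_induction with
  | mem x hx =>
    exact aux_kills_mono 𝒜 hconn hgen
      (le_trans (Finset.le_sup (Finset.mem_univ (⟨x, hx⟩ : {x // x ∈ S}))) (le_max_right _ _))
      (hd2 ⟨x, hx⟩)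
  | zero => exact fun g _ => zero_mul g
  | add x y _ _ ihx ihy => exact fun g hg => by rw [add_mul, ihx g hg, ihy g hg, add_zero]
  | smul c x _ ihx => exact fun g hg => by rw [smul_mul_assoc, ihx g hg, smul_zero]

theorem aux_complement (hfin : ∀ d : ℕ, Module.Finite K (𝒜 d)) (n : ℕ) :
    ∃ C : Submodule K A, Module.Finite K ↥C ∧
      Module.finrank K ↥C ≤
        Module.finrank K ↥((𝒜 n).map (Submodule.span K (proSet K A 𝒜)).mkQ) ∧
      𝒜 n ≤ C ⊔ (Submodule.span K (proSet K A 𝒜) ⊓ 𝒜 n) := by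
  classical
  set P := Submodule.span K (proSet K A 𝒜) with hPdef
  haveI := hfin n
  set B := (𝒜 n).map P.mkQ with hBdef
  haveI : Module.Finite K ↥B := Module.Finite.map _ _
  set b := Module.finrank K ↥B with hbdef
  set β : Module.Basis (Fin b) K ↥B := Module.finBasis K ↥B with hβ
  have hx : ∀ i : Fin b, ∃ x ∈ 𝒜 n, P.mkQ x = ((β i : ↥B) : A ⧸ P) :=
    fun i => Submodule.mem_map.mp (β i).2
  choose x hx1 hx2 using hx
  refine ⟨Submodule.span K (Set.range x),
    FiniteDimensional.span_of_finite K (Set.finite_range x),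
    le_trans (finrank_range_le_card x) (by simp), fun y hy => ?_⟩
  have hq : P.mkQ y ∈ B := Submodule.mem_map_of_mem hy
  set qy : ↥B := ⟨P.mkQ y, hq⟩ with hqy
  set z := ∑ i, β.repr qy i • x i with hz
  have hz1 : z ∈ Submodule.span K (Set.range x) :=
    Submodule.sum_mem _ fun i _ =>
      Submodule.smul_mem _ _ (Submodule.subset_span ⟨i, rfl⟩)
  have hz2 : z ∈ 𝒜 n := Submodule.sum_mem _ fun i _ => Submodule.smul_mem _ _ (hx1 i)
  have hmkz : P.mkQ z = P.mkQ y := by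
    have h1 : P.mkQ z = ∑ i, β.repr qy i • ((β i : ↥B) : A ⧸ P) := by
      rw [hz, map_sum]
      exact Finset.sum_congr rfl fun i _ => by rw [map_smul, hx2 i]
    have h2 : ((∑ i, β.repr qy i • β i : ↥B) : A ⧸ P)
        = ∑ i, β.repr qy i • ((β i : ↥B) : A ⧸ P) := by
      simp [-Module.Basis.sum_repr]
    rw [h1, ← h2, β.sum_repr qy]
  have hsub : y - z ∈ P ⊓ 𝒜 n := by
    constructor
    · have h0 : P.mkQ (y - z) = 0 := by rw [map_sub, hmkz, sub_self]
      rwa [← LinearMap.mem_ker, Submodule.ker_mkQ] at h0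
    · exact Submodule.sub_mem _ hy hz2
  have hdecomp : y = z + (y - z) := by abel
  rw [hdecomp]
  exact Submodule.add_mem_sup hz1 hsub

theorem aux_finrank_mul_le (M N : Submodule K A) [Module.Finite K ↥M] [Module.Finite K ↥N] :
    Module.finrank K ↥(M * N) ≤ Module.finrank K ↥M * Module.finrank K ↥N := by
  have h : Module.finrank K ↥(LinearMap.range (Submodule.mulMap M N))
      ≤ Module.finrank K ↥M * Module.finrank K ↥N := by
    refine le_trans (LinearMap.finrank_range_le _) ?_
    rw [Module.finrank_tensorProduct]
  rw [Submodule.mulMap_range] at h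
  exact h

theorem aux_mul_finite (M N : Submodule K A) [Module.Finite K ↥M] [Module.Finite K ↥N] :
    Module.Finite K ↥(M * N) := by
  rw [← Submodule.mulMap_range]
  infer_instance

theorem aux_pow_bound (hconn : 𝒜 0 = Submodule.span K {1})
    (hgen : ∀ n : ℕ, 𝒜 (n + 1) = 𝒜 1 * 𝒜 n ∧ 𝒜 (n + 1) = 𝒜 n * 𝒜 1)
    (hfin : ∀ d : ℕ, Module.Finite K (𝒜 d))
    (n D : ℕ) (C : Submodule K A) [Module.Finite K ↥C]
    (hD : ∀ f ∈ Submodule.span K (proSet K A 𝒜) ⊓ 𝒜 n, ∀ g ∈ 𝒜 D, f * g = 0)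
    (hle : 𝒜 n ≤ C ⊔ (Submodule.span K (proSet K A 𝒜) ⊓ 𝒜 n)) :
    ∀ k m : ℕ, D ≤ m →
      Module.finrank K ↥(𝒜 (k * n + m)) ≤
        Module.finrank K ↥C ^ k * Module.finrank K ↥(𝒜 m) := by
  intro k
  induction k with
  | zero => intro m _; rw [Nat.zero_mul, Nat.zero_add, pow_zero, Nat.one_mul]
  | succ k ih =>
    intro m hm
    haveI := hfin (k * n + m)
    haveI := aux_mul_finite (K := K) C (𝒜 (k * n + m))
    have hkey : 𝒜 ((k + 1) * n + m) ≤ C * 𝒜 (k * n + m) := by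
      have heq : (k + 1) * n + m = n + (k * n + m) := by ring
      rw [heq, aux_grading_mul 𝒜 hconn hgen n (k * n + m)]
      refine Submodule.mul_le.mpr fun y hy g hg => ?_
      obtain ⟨z, hz, p, hp, hzp⟩ := Submodule.mem_sup.mp (hle hy)
      have hpg : p * g = 0 :=
        aux_kills_mono 𝒜 hconn hgen (le_trans hm (Nat.le_add_left m (k * n)))
          (fun g' hg' => hD p hp g' hg') g hg
      have : y * g = z * g := by rw [← hzp, add_mul, hpg, add_zero]
      rw [this]
      exact Submodule.mul_mem_mul hz hg
    calc Module.finrank K ↥(𝒜 ((k + 1) * n + m))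
        ≤ Module.finrank K ↥(C * 𝒜 (k * n + m)) := Submodule.finrank_mono hkey
      _ ≤ Module.finrank K ↥C * Module.finrank K ↥(𝒜 (k * n + m)) :=
          aux_finrank_mul_le C (𝒜 (k * n + m))
      _ ≤ Module.finrank K ↥C * (Module.finrank K ↥C ^ k * Module.finrank K ↥(𝒜 m)) :=
          Nat.mul_le_mul_left _ (ih m hm)
      _ = Module.finrank K ↥C ^ (k + 1) * Module.finrank K ↥(𝒜 m) := by ring


end AuxStatement8


/-- If a connected graded algebra (generated in degree 1, with
finite-dimensional homogeneous components) has exponential growth, i.e.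
`limsup_n γ_A(n)^{1/n} > 1` where `γ_A(n) = dim_F ⊕_{i≤n} A_i`, then its maximal
(right) prolongable quotient `A/pro(A)` also has exponential growth. -/


theorem statement8 (F : Type) [Field F] (A : Type) [Ring A] [Algebra F A]
    (𝒜 : ℕ → Submodule F A) [GradedAlgebra 𝒜]
    (hfin : ∀ d : ℕ, Module.Finite F (𝒜 d))
    (hconn : 𝒜 0 = Submodule.span F {1})
    (hgen : ∀ n : ℕ, 𝒜 (n + 1) = 𝒜 1 * 𝒜 n ∧ 𝒜 (n + 1) = 𝒜 n * 𝒜 1)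
    (hexp : 1 < Filter.limsup
        (fun n : ℕ =>
          ((∑ i ∈ Finset.range (n + 1), Module.finrank F (𝒜 i) : ℕ) : ℝ) ^ ((n : ℝ)⁻¹))
        Filter.atTop) :
    1 < Filter.limsup
        (fun n : ℕ =>
          ((∑ i ∈ Finset.range (n + 1),
              Module.finrank F
                ((𝒜 i).map (Submodule.span F (proSet F A 𝒜)).mkQ) : ℕ) : ℝ) ^ ((n : ℝ)⁻¹))
        Filter.atTop := by
  classical
  by_contra hgoal
  set P := Submodule.span F (proSet F A 𝒜) with hPdef
  set a : ℕ → ℕ := fun i => Module.finrank F (𝒜 i) with hadef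
  set b : ℕ → ℕ := fun i => Module.finrank F ((𝒜 i).map P.mkQ) with hbdef
  set γA : ℕ → ℕ := fun n => ∑ i ∈ Finset.range (n + 1), a i with hγAdef
  set γB : ℕ → ℕ := fun n => ∑ i ∈ Finset.range (n + 1), b i with hγBdef
  set u : ℕ → ℝ := fun n => ((γA n : ℕ) : ℝ) ^ ((n : ℝ)⁻¹) with hudef
  set v : ℕ → ℝ := fun n => ((γB n : ℕ) : ℝ) ^ ((n : ℝ)⁻¹) with hvdef
  have hexp' : 1 < Filter.limsup u Filter.atTop := hexp
  have hgoal' : Filter.limsup v Filter.atTop ≤ 1 := not_lt.mp hgoal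
  -- nonnegativity
  have hu0 : ∀ n, 0 ≤ u n := fun n => Real.rpow_nonneg (Nat.cast_nonneg _) _
  have hv0 : ∀ n, 0 ≤ v n := fun n => Real.rpow_nonneg (Nat.cast_nonneg _) _
  -- u is bounded above
  have hubdd : Filter.IsBoundedUnder (· ≤ ·) Filter.atTop u := by
    by_contra hnb
    have hempty : {x : ℝ | ∀ᶠ n in Filter.atTop, u n ≤ x} = ∅ := by
      rw [Set.eq_empty_iff_forall_notMem]
      intro x hx
      exact hnb ⟨x, by rwa [Filter.eventually_map]⟩
    rw [Filter.limsup_eq, hempty, Real.sInf_empty] at hexp'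
    norm_num at hexp'
  -- v ≤ u pointwise
  have hba : ∀ n, γB n ≤ γA n := by
    intro n
    refine Finset.sum_le_sum fun i _ => ?_
    haveI := hfin i
    exact Submodule.finrank_map_le _ _
  have hvu : ∀ n, v n ≤ u n := fun n =>
    Real.rpow_le_rpow (Nat.cast_nonneg _) (Nat.cast_le.mpr (hba n)) (by positivity)
  have hvbdd : Filter.IsBoundedUnder (· ≤ ·) Filter.atTop v := by
    obtain ⟨x, hx⟩ := hubdd
    rw [Filter.eventually_map] at hx
    exact ⟨x, Filter.eventually_map.mpr (hx.mono fun n h => le_trans (hvu n) h)⟩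
  -- main estimate
  have key : ∀ c : ℝ, 1 < c → ∀ᶠ N in Filter.atTop, u N ≤ c := by
    intro c hc
    set c1 : ℝ := (1 + c) / 2 with hc1def
    have hc1 : 1 < c1 := by rw [hc1def]; linarith
    have hc1c : c1 < c := by rw [hc1def]; linarith
    have hc1pos : (0:ℝ) < c1 := lt_trans one_pos hc1
    have hev : ∀ᶠ n in Filter.atTop, v n < c1 :=
      Filter.eventually_lt_of_limsup_lt (lt_of_le_of_lt hgoal' hc1) hvbdd
    obtain ⟨n₀, hvn₀, hn₀1⟩ := (hev.and (Filter.eventually_ge_atTop 1)).exists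
    -- b n₀ ≤ c1 ^ n₀
    have hγBn₀ : (γB n₀ : ℝ) < c1 ^ n₀ := by
      have h1 : ((γB n₀ : ℝ) ^ ((n₀ : ℝ)⁻¹)) ^ n₀ = (γB n₀ : ℝ) :=
        Real.rpow_inv_natCast_pow (Nat.cast_nonneg _) (by omega)
      calc (γB n₀ : ℝ) = (v n₀) ^ n₀ := h1.symm
        _ < c1 ^ n₀ := pow_lt_pow_left₀ hvn₀ (hv0 n₀) (by omega)
    have hbn₀ : (b n₀ : ℝ) ≤ c1 ^ n₀ := by
      have h2 : (b n₀ : ℝ) ≤ (γB n₀ : ℝ) :=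
        Nat.cast_le.mpr (Finset.single_le_sum (f := b) (fun i _ => Nat.zero_le _)
          (Finset.self_mem_range_succ n₀))
      linarith
    -- algebraic data
    obtain ⟨D, hD1, hDkill⟩ := aux_findD 𝒜 hconn hgen hfin n₀
    obtain ⟨C, hCfin, hCrank, hCle⟩ := aux_complement 𝒜 hfin n₀
    haveI := hCfin
    have hpow := aux_pow_bound 𝒜 hconn hgen hfin n₀ D C hDkill hCle
    have hCc1 : (Module.finrank F ↥C : ℝ) ≤ c1 ^ n₀ :=
      le_trans (Nat.cast_le.mpr hCrank) hbn₀
    set M : ℝ := (γA (D + n₀) : ℝ) with hMdef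
    have hM0 : 0 ≤ M := Nat.cast_nonneg _
    have haM : ∀ m : ℕ, m ≤ D + n₀ → (a m : ℝ) ≤ M := by
      intro m hm
      exact_mod_cast Nat.cast_le.mpr (Finset.single_le_sum (f := a)
        (fun i _ => Nat.zero_le _) (Finset.mem_range_succ_iff.mpr hm))
    have hbound : ∀ i : ℕ, (a i : ℝ) ≤ M * c1 ^ i := by
      intro i
      rcases lt_or_ge i D with hi | hi
      · calc (a i : ℝ) ≤ M := haM i (by omega)
          _ ≤ M * c1 ^ i := le_mul_of_one_le_right hM0 (one_le_pow₀ hc1.le)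
      · set k := (i - D) / n₀ with hk
        have hdm := Nat.div_add_mod (i - D) n₀
        have hml : (i - D) % n₀ < n₀ := Nat.mod_lt _ (by omega)
        have hkc : k * n₀ = n₀ * ((i - D) / n₀) := by rw [hk, Nat.mul_comm]
        have hx1 : k * n₀ ≤ i - D := by omega
        have hx2 : i - D < k * n₀ + n₀ := by omega
        set m := i - k * n₀ with hm
        have him : i = k * n₀ + m := by omega
        have hm1 : D ≤ m := by omega
        have hm2 : m ≤ D + n₀ := by omega
        have h1 : a i ≤ Module.finrank F ↥C ^ k * a m := by
          rw [him]; exact hpow k m hm1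
        have h2 : (a i : ℝ) ≤ (Module.finrank F ↥C : ℝ) ^ k * (a m : ℝ) := by
          exact_mod_cast Nat.cast_le.mpr h1
        calc (a i : ℝ) ≤ (Module.finrank F ↥C : ℝ) ^ k * (a m : ℝ) := h2
          _ ≤ (c1 ^ n₀) ^ k * M := by
              refine mul_le_mul ?_ (haM m hm2) (Nat.cast_nonneg _) (by positivity)
              exact pow_le_pow_left₀ (Nat.cast_nonneg _) hCc1 k
          _ = M * c1 ^ (k * n₀) := by rw [← pow_mul']; ring
          _ ≤ M * c1 ^ i := by
              refine mul_le_mul_of_nonneg_left ?_ hM0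
              exact pow_le_pow_right₀ hc1.le (by omega)
    -- sum bound
    have hgam : ∀ N : ℕ, (γA N : ℝ) ≤ M * (N + 1) * c1 ^ N := by
      intro N
      have : (γA N : ℝ) = ∑ i ∈ Finset.range (N + 1), (a i : ℝ) := by
        rw [hγAdef]; push_cast; ring
      rw [this]
      calc ∑ i ∈ Finset.range (N + 1), (a i : ℝ)
          ≤ ∑ _i ∈ Finset.range (N + 1), M * c1 ^ N := by
            refine Finset.sum_le_sum fun i hi => ?_
            refine le_trans (hbound i) (mul_le_mul_of_nonneg_left ?_ hM0)
            exact pow_le_pow_right₀ hc1.le (by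
              have := Finset.mem_range.mp hi; omega)
        _ = M * (N + 1) * c1 ^ N := by
            rw [Finset.sum_const, Finset.card_range, nsmul_eq_mul]
            push_cast; ring
    -- geometric domination
    set t : ℝ := c / c1 with htdef
    have ht : 1 < t := (one_lt_div hc1pos).mpr hc1c
    have ht0 : (0:ℝ) < t := lt_trans one_pos ht
    have hlim : Filter.Tendsto (fun N : ℕ => M * (N + 1) / t ^ N) Filter.atTop (nhds 0) := by
      have h1 := tendsto_pow_const_div_const_pow_of_one_lt 1 ht
      have h0 := tendsto_pow_const_div_const_pow_of_one_lt 0 ht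
      have hsum := (h1.const_mul M).add (h0.const_mul M)
      have heq : (fun N : ℕ => M * (N + 1) / t ^ N)
          = fun N : ℕ => M * ((N : ℝ) ^ 1 / t ^ N) + M * ((N : ℝ) ^ 0 / t ^ N) := by
        funext N
        have hne : t ^ N ≠ 0 := by positivity
        field_simp
      rw [heq]
      simpa using hsum
    have hev2 : ∀ᶠ N : ℕ in Filter.atTop, M * ((N : ℝ) + 1) / t ^ N ≤ 1 :=
      hlim.eventually (eventually_le_nhds one_pos)
    filter_upwards [hev2, Filter.eventually_ge_atTop 1] with N hN hN1
    have hpow2 : (0:ℝ) < t ^ N := by positivity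
    have h3 : M * (N + 1) ≤ t ^ N := by rwa [div_le_one hpow2] at hN
    have h4 : (γA N : ℝ) ≤ c ^ N := by
      calc (γA N : ℝ) ≤ M * (N + 1) * c1 ^ N := hgam N
        _ ≤ t ^ N * c1 ^ N := mul_le_mul_of_nonneg_right h3 (by positivity)
        _ = c ^ N := by
            rw [← mul_pow, htdef, div_mul_cancel₀]
            exact ne_of_gt hc1pos
    have hc0 : (0:ℝ) ≤ c := le_trans zero_le_one hc.le
    calc u N = ((γA N : ℕ) : ℝ) ^ ((N : ℝ)⁻¹) := rfl
      _ ≤ (c ^ N) ^ ((N : ℝ)⁻¹) := Real.rpow_le_rpow (Nat.cast_nonneg _) h4 (by positivity)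
      _ = c := Real.pow_rpow_inv_natCast hc0 (by omega)
  -- conclude
  set L := Filter.limsup u Filter.atTop with hLdef
  have hL2 : 1 < (1 + L) / 2 := by
    rw [hLdef] at *
    linarith
  have hle2 : L ≤ (1 + L) / 2 := by
    refine Filter.limsup_le_of_le ?_ (key ((1 + L) / 2) hL2)
    exact Filter.isCoboundedUnder_le_of_le Filter.atTop hu0
  linarith
end
end

section
/- Let A be a finitely generated infinite-dimensional monomial algebra over a field F. Then A/pro_l(A) has linear growth if and only if A/pro_r(A) has linear growth. -/
noncomputable section

open scoped BigOperators

variable (F : Type) [Field F] {m : ℕ}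

/-- The growth function of the quotient of the monomial algebra by the `F`-span of
a subset `P` (e.g. a prolongable radical): `n ↦ dim_F ⊕_{i≤n}` of the images of the
homogeneous components. -/
def quotGrowth (F : Type) [Field F] {m : ℕ} (W : Set (List (Fin m)))
    (P : Set (MonAlg F W)) (n : ℕ) : ℕ :=
  ∑ i ∈ Finset.range (n + 1),
    Module.finrank F ((homog F W i).map (Submodule.span F P).mkQ)


section Comb

variable {m : ℕ}

/-- auxiliary: list take splits -/
lemma takeAdd {α : Type*} (a b : ℕ) : ∀ (l : List α), l.take (a + b) = l.take a ++ (l.drop a).take b := by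
  induction a with
  | zero => intro l; simp
  | succ a ih =>
    intro l
    cases l with
    | nil => simp
    | cons x xs => simp [Nat.succ_add, ih]

lemma finite_len (n : ℕ) : {l : List (Fin m) | l.length = n}.Finite :=
  List.finite_length_eq _ _

lemma ncard_len_le (n : ℕ) : {l : List (Fin m) | l.length = n}.ncard ≤ m ^ n := by
  have hsub : {l : List (Fin m) | l.length = n} ⊆
      List.Vector.toList '' (Set.univ : Set (List.Vector (Fin m) n)) := by
    intro l hl
    exact ⟨⟨l, hl⟩, Set.mem_univ _, rfl⟩
  calc {l : List (Fin m) | l.length = n}.ncard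
      ≤ (List.Vector.toList '' (Set.univ : Set (List.Vector (Fin m) n))).ncard :=
        Set.ncard_le_ncard hsub (Set.Finite.image _ (Set.finite_univ))
    _ ≤ (Set.univ : Set (List.Vector (Fin m) n)).ncard := Set.ncard_image_le Set.finite_univ
    _ = m ^ n := by
        rw [Set.ncard_univ, Nat.card_eq_fintype_card, card_vector, Fintype.card_fin]

variable (Bad : List (Fin m) → Prop)

def ExtR : List (Fin m) → Prop := fun u => ∀ d : ℕ, ∃ v : List (Fin m), v.length = d ∧ ¬ Bad (u ++ v)

def RSet (i : ℕ) : Set (List (Fin m)) := {u | u.length = i ∧ ExtR Bad u}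

def ExtL : List (Fin m) → Prop := fun u => ∀ d : ℕ, ∃ v : List (Fin m), v.length = d ∧ ¬ Bad (v ++ u)

def LSet (i : ℕ) : Set (List (Fin m)) := {u | u.length = i ∧ ExtL Bad u}

lemma finite_RSet (i : ℕ) : (RSet Bad i).Finite :=
  (finite_len i).subset (fun _ h => h.1)

lemma finite_LSet (i : ℕ) : (LSet Bad i).Finite :=
  (finite_len i).subset (fun _ h => h.1)

variable (hR : ∀ x y, Bad x → Bad (x ++ y)) (hL : ∀ x y, Bad y → Bad (x ++ y))

include hR in
lemma shrink {x w : List (Fin m)} {d : ℕ} (hd : d ≤ w.length) (h : ¬ Bad (x ++ w)) :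
    ∃ v : List (Fin m), v.length = d ∧ ¬ Bad (x ++ v) := by
  refine ⟨w.take d, by simpa using hd, fun hb => h ?_⟩
  have := hR (x ++ w.take d) (w.drop d) hb
  rwa [List.append_assoc, List.take_append_drop] at this

include hR in
lemma extR_prefix {x y : List (Fin m)} (h : ExtR Bad (x ++ y)) : ExtR Bad x := by
  intro d
  obtain ⟨v, hv, hnb⟩ := h d
  rw [List.append_assoc] at hnb
  exact shrink Bad hR (by simp [hv]) hnb

include hR hL in
lemma not_bad_factor {x y z : List (Fin m)} (h : ¬ Bad (x ++ y ++ z)) : ¬ Bad y := by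
  intro hb
  exact h (by rw [List.append_assoc]; exact hL _ _ (hR _ _ hb))

include hR in
lemma konig {u : List (Fin m)} (h : ExtR Bad u) : ∃ a : Fin m, ExtR Bad (u ++ [a]) := by
  by_contra hc
  push_neg at hc
  have hc' : ∀ a : Fin m, ∃ d : ℕ, ∀ v : List (Fin m), v.length = d → Bad ((u ++ [a]) ++ v) := by
    intro a
    have := hc a
    unfold ExtR at this
    push_neg at this
    obtain ⟨d, hd⟩ := this
    exact ⟨d, fun v hv => hd v hv⟩
  choose D hD using hc'
  set N : ℕ := Finset.univ.sup D with hN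
  obtain ⟨v, hv, hnb⟩ := h (N + 1)
  cases v with
  | nil => simp at hv
  | cons a w =>
    have hw : w.length = N := by simpa using hv
    have hDa : D a ≤ w.length := by rw [hw]; exact Finset.le_sup (Finset.mem_univ a)
    have hbad : Bad ((u ++ [a]) ++ w.take (D a)) := hD a _ (by simpa using hDa)
    have : Bad (((u ++ [a]) ++ w.take (D a)) ++ w.drop (D a)) := hR _ _ hbad
    rw [List.append_assoc, List.take_append_drop] at this
    exact hnb (by simpa [List.append_assoc] using this)

include hR in
lemma rset_subset_image (i : ℕ) : RSet Bad i ⊆ List.dropLast '' (RSet Bad (i + 1)) := by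
  intro u hu
  obtain ⟨a, ha⟩ := konig Bad hR hu.2
  exact ⟨u ++ [a], ⟨by simp [hu.1], ha⟩, by simp⟩

include hR in
lemma image_subset_rset (i : ℕ) : List.dropLast '' (RSet Bad (i + 1)) ⊆ RSet Bad i := by
  rintro _ ⟨w, hw, rfl⟩
  have hne : w ≠ [] := by
    intro h
    have hlen := hw.1
    rw [h] at hlen
    simp at hlen
  have hw' : w = w.dropLast ++ [w.getLast hne] := (List.dropLast_concat_getLast hne).symm
  constructor
  · have := hw.1; simp [List.length_dropLast, this]
  · apply extR_prefix Bad hR (y := [w.getLast hne])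
    rw [← hw']
    exact hw.2

include hR in
lemma rcard_mono (i : ℕ) : (RSet Bad i).ncard ≤ (RSet Bad (i + 1)).ncard := by
  calc (RSet Bad i).ncard ≤ (List.dropLast '' (RSet Bad (i + 1))).ncard :=
        Set.ncard_le_ncard (rset_subset_image Bad hR i) ((finite_RSet Bad (i+1)).image _)
    _ ≤ (RSet Bad (i + 1)).ncard := Set.ncard_image_le (finite_RSet Bad (i+1))

include hR in
lemma stab (l : ℕ) : ∃ T : ℕ, ∀ u : List (Fin m), u.length = l →
    (∃ v : List (Fin m), v.length = T ∧ ¬ Bad (u ++ v)) → ExtR Bad u := by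
  set S : ℕ → Set (List (Fin m)) :=
    fun t => {u | u.length = l ∧ ∃ v : List (Fin m), v.length = t ∧ ¬ Bad (u ++ v)} with hS
  have hfin : ∀ t, (S t).Finite := fun t => (finite_len l).subset (fun _ h => h.1)
  have hanti : ∀ t t', t' ≤ t → S t ⊆ S t' := by
    rintro t t' htt u ⟨hl, v, hv, hnb⟩
    exact ⟨hl, shrink Bad hR (by omega) hnb⟩
  obtain ⟨T, hT⟩ : ∃ T, (S T).ncard = sInf (Set.range fun t => (S t).ncard) := by
    have := Nat.sInf_mem (Set.range_nonempty (fun t => (S t).ncard))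
    obtain ⟨T, hT⟩ := this
    exact ⟨T, hT⟩
  refine ⟨T, fun u hu hv => ?_⟩
  have huT : u ∈ S T := ⟨hu, hv⟩
  intro d
  rcases le_or_gt d T with hdT | hdT
  · obtain ⟨_, v, hv', hnb⟩ := huT
    exact shrink Bad hR (by omega) hnb
  · have heq : S d = S T := by
      refine Set.eq_of_subset_of_ncard_le (hanti d T (le_of_lt hdT)) ?_ (hfin T)
      rw [hT]
      exact Nat.sInf_le ⟨d, rfl⟩
    have : u ∈ S d := heq ▸ huT
    exact this.2

include hR in
lemma plateau {B : ℕ} (hB : ∀ i, (RSet Bad i).ncard ≤ B) :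
    ∃ J : ℕ, ∀ j, J ≤ j → (RSet Bad j).ncard = (RSet Bad J).ncard := by
  have hmono : Monotone fun i => (RSet Bad i).ncard :=
    monotone_nat_of_le_succ (rcard_mono Bad hR)
  have hne : (Set.range fun i => (RSet Bad i).ncard).Nonempty := Set.range_nonempty _
  have hbdd : BddAbove (Set.range fun i => (RSet Bad i).ncard) := ⟨B, by rintro _ ⟨i, rfl⟩; exact hB i⟩
  obtain ⟨J, hJ⟩ := Nat.sSup_mem hne hbdd
  exact ⟨J, fun j hj => le_antisymm ((le_csSup hbdd ⟨j, rfl⟩).trans hJ.ge) (hmono hj)⟩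

include hR in
lemma dropLast_injOn {J : ℕ} (h : (RSet Bad (J + 1)).ncard = (RSet Bad J).ncard) :
    Set.InjOn List.dropLast (RSet Bad (J + 1)) := by
  have himg : List.dropLast '' (RSet Bad (J + 1)) = RSet Bad J :=
    Set.Subset.antisymm (image_subset_rset Bad hR J) (rset_subset_image Bad hR J)
  apply Set.injOn_of_ncard_image_eq
  · rw [himg, ← h]
  · exact finite_RSet Bad _



include hR hL in
lemma not_bad_mid {u : List (Fin m)} (hu : ¬ Bad u) (a b : ℕ) : ¬ Bad ((u.drop a).take b) := by
  intro hb
  apply hu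
  have h1 : Bad ((u.drop a).take b ++ (u.drop a).drop b) := hR _ _ hb
  rw [List.take_append_drop] at h1
  have h2 : Bad (u.take a ++ u.drop a) := hL _ _ h1
  rwa [List.take_append_drop] at h2

include hR hL in
lemma main_bound {B : ℕ} (hB : ∀ i, (RSet Bad i).ncard ≤ B) :
    ∃ C : ℕ, ∀ i, (LSet Bad i).ncard ≤ C := by
  obtain ⟨J, hJ⟩ := plateau Bad hR hB
  obtain ⟨T, hT⟩ := stab Bad hR (J + 1)
  refine ⟨max 1 (m ^ (J + (J + 1 + T))), fun i => ?_⟩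
  have hlen_le : (LSet Bad i).ncard ≤ m ^ i :=
    le_trans (Set.ncard_le_ncard (fun u hu => hu.1) (finite_len i)) (ncard_len_le i)
  rcases lt_or_ge i (J + 1 + T) with hiK | hiK
  · rcases Nat.eq_zero_or_pos m with hm | hm
    · subst hm
      rcases Nat.eq_zero_or_pos i with hi | hi
      · subst hi; exact le_trans hlen_le (by simp)
      · refine le_trans hlen_le ?_
        rw [Nat.zero_pow (by omega)]
        exact Nat.zero_le _
    · exact le_trans hlen_le
        (le_max_of_le_right (Nat.pow_le_pow_right hm (by omega)))
  · -- large case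
    have hinj' : Set.InjOn List.dropLast (RSet Bad (J + 1)) :=
      dropLast_injOn Bad hR (hJ (J + 1) (by omega))
    have huniq : ∀ w t t' : List (Fin m),
        (w ++ t) ∈ RSet Bad (J + 1) → (w ++ t') ∈ RSet Bad (J + 1) →
        t.length = 1 → t'.length = 1 → t = t' := by
      intro w t t' hw hw' ht ht'
      obtain ⟨c, rfl⟩ := List.length_eq_one_iff.mp ht
      obtain ⟨c', rfl⟩ := List.length_eq_one_iff.mp ht'
      have h1 : (w ++ [c]).dropLast = (w ++ [c']).dropLast := by simp
      have := hinj' hw hw' h1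
      exact List.append_cancel_left this
    have key : Set.InjOn (fun u : List (Fin m) => u.take J ++ u.drop (i - (J + 1 + T))) (LSet Bad i) := by
      intro u hu u' hu' heq
      obtain ⟨hul, huE⟩ := hu
      obtain ⟨hul', huE'⟩ := hu'
      have hlenJ : (u.take J).length = (u'.take J).length := by
        simp [hul, hul']
      obtain ⟨hJeq, hSeq⟩ := List.append_inj heq hlenJ
      have hubad : ¬ Bad u := by
        obtain ⟨v, hv0, hnb⟩ := huE 0
        rw [List.length_eq_zero_iff.mp hv0] at hnb
        simpa using hnb
      have hubad' : ¬ Bad u' := by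
        obtain ⟨v, hv0, hnb⟩ := huE' 0
        rw [List.length_eq_zero_iff.mp hv0] at hnb
        simpa using hnb
      have hwin : ∀ w : List (Fin m), ¬ Bad w → w.length = i → ∀ n, J ≤ n → n + 1 + T ≤ i →
          (w.drop (n - J)).take (J + 1) ∈ RSet Bad (J + 1) := by
        intro w hwb hwl n hn hni
        have hdl : (w.drop (n - J)).length = i - (n - J) := by simp [hwl]
        constructor
        · simp only [List.length_take, hdl]
          omega
        · apply hT _ (by simp only [List.length_take, hdl]; omega)
          refine ⟨((w.drop (n - J)).drop (J + 1)).take T, ?_, ?_⟩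
          · simp only [List.length_take, List.length_drop, hdl]
            omega
          · have heq2 : (w.drop (n - J)).take (J + 1) ++ ((w.drop (n - J)).drop (J + 1)).take T
                = (w.drop (n - J)).take (J + 1 + T) := (takeAdd _ _ _).symm
            rw [heq2]
            exact not_bad_mid Bad hR hL hwb _ _
      have main : ∀ n, J ≤ n → n ≤ i - T - 1 → u.take n = u'.take n := by
        intro n hn
        induction n, hn using Nat.le_induction with
        | base => intro _; exact hJeq
        | succ n hn ih =>
          intro hni
          have htk := ih (by omega)
          have hni' : n + 1 + T ≤ i := by omega
          have hw := hwin u hubad hul n hn hni'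
          have hw' := hwin u' hubad' hul' n hn hni'
          have hxJ : (u.drop (n - J)).take J = (u.take n).drop (n - J) := by
            rw [List.take_drop, Nat.sub_add_cancel hn]
          have hxJ' : (u'.drop (n - J)).take J = (u'.take n).drop (n - J) := by
            rw [List.take_drop, Nat.sub_add_cancel hn]
          have hweq : (u.drop (n - J)).take J = (u'.drop (n - J)).take J := by
            rw [hxJ, hxJ', htk]
          have hsplit : (u.drop (n - J)).take (J + 1)
              = (u.drop (n - J)).take J ++ ((u.drop (n - J)).drop J).take 1 := takeAdd _ _ _
          have hsplit' : (u'.drop (n - J)).take (J + 1)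
              = (u'.drop (n - J)).take J ++ ((u'.drop (n - J)).drop J).take 1 := takeAdd _ _ _
          have hdd : (u.drop (n - J)).drop J = u.drop n := by
            rw [List.drop_drop, Nat.sub_add_cancel hn]
          have hdd' : (u'.drop (n - J)).drop J = u'.drop n := by
            rw [List.drop_drop, Nat.sub_add_cancel hn]
          have hteq : (u.drop n).take 1 = (u'.drop n).take 1 := by
            apply huniq ((u.drop (n - J)).take J)
            · rw [← hdd, ← hsplit]; exact hw
            · rw [hweq, ← hdd', ← hsplit']; exact hw'
            · simp only [List.length_take, List.length_drop, hul]; omega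
            · simp only [List.length_take, List.length_drop, hul']; omega
          have hfin1 : u.take (n + 1) = u.take n ++ (u.drop n).take 1 := takeAdd _ _ _
          have hfin2 : u'.take (n + 1) = u'.take n ++ (u'.drop n).take 1 := takeAdd _ _ _
          rw [hfin1, hfin2, htk, hteq]
      have hmain : u.take (i - T - 1 ) = u'.take (i - T - 1) := main _ (by omega) (by omega)
      have hdropeq : u.drop (i - T - 1) = u'.drop (i - T - 1) := by
        have h1 : (i - (J + 1 + T)) + ((J + 1 + T) - T - 1) = i - T - 1 := by omega
        rw [← h1, ← List.drop_drop, ← List.drop_drop, hSeq]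
      calc u = u.take (i - T - 1) ++ u.drop (i - T - 1) := (List.take_append_drop _ _).symm
        _ = u'.take (i - T - 1) ++ u'.drop (i - T - 1) := by rw [hmain, hdropeq]
        _ = u' := List.take_append_drop _ _
    have himgsub : (fun u : List (Fin m) => u.take J ++ u.drop (i - (J + 1 + T))) '' (LSet Bad i)
        ⊆ {l : List (Fin m) | l.length = J + (J + 1 + T)} := by
      rintro _ ⟨u, hu, rfl⟩
      simp only [Set.mem_setOf_eq, List.length_append, List.length_take, List.length_drop, hu.1]
      omega
    calc (LSet Bad i).ncard
        = ((fun u : List (Fin m) => u.take J ++ u.drop (i - (J + 1 + T))) '' (LSet Bad i)).ncard :=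
          (Set.ncard_image_of_injOn key).symm
      _ ≤ ({l : List (Fin m) | l.length = J + (J + 1 + T)}).ncard :=
          Set.ncard_le_ncard himgsub (finite_len _)
      _ ≤ m ^ (J + (J + 1 + T)) := ncard_len_le _
      _ ≤ max 1 (m ^ (J + (J + 1 + T))) := le_max_right _ _

lemma rset_rev_mem (u : List (Fin m)) (i : ℕ) :
    u ∈ RSet (fun w => Bad w.reverse) i ↔ u.reverse ∈ LSet Bad i := by
  constructor
  · rintro ⟨hl, hE⟩
    refine ⟨by simp [hl], fun d => ?_⟩
    obtain ⟨v, hv, hnb⟩ := hE d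
    refine ⟨v.reverse, by simp [hv], ?_⟩
    have hnb' : ¬ Bad ((u ++ v).reverse) := hnb
    rwa [List.reverse_append] at hnb'
  · rintro ⟨hl, hE⟩
    refine ⟨by simpa using hl, fun d => ?_⟩
    obtain ⟨v, hv, hnb⟩ := hE d
    refine ⟨v.reverse, by simp [hv], ?_⟩
    show ¬ Bad ((u ++ v.reverse).reverse)
    rw [List.reverse_append]
    simpa using hnb

lemma lset_rev_mem (u : List (Fin m)) (i : ℕ) :
    u ∈ LSet (fun w => Bad w.reverse) i ↔ u.reverse ∈ RSet Bad i := by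
  constructor
  · rintro ⟨hl, hE⟩
    refine ⟨by simp [hl], fun d => ?_⟩
    obtain ⟨v, hv, hnb⟩ := hE d
    refine ⟨v.reverse, by simp [hv], ?_⟩
    have hnb' : ¬ Bad ((v ++ u).reverse) := hnb
    rwa [List.reverse_append] at hnb'
  · rintro ⟨hl, hE⟩
    refine ⟨by simpa using hl, fun d => ?_⟩
    obtain ⟨v, hv, hnb⟩ := hE d
    refine ⟨v.reverse, by simp [hv], ?_⟩
    show ¬ Bad ((v.reverse ++ u).reverse)
    rw [List.reverse_append]
    simpa using hnb

lemma lset_eq_rev_image (i : ℕ) :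
    LSet Bad i = List.reverse '' RSet (fun w => Bad w.reverse) i := by
  ext x
  constructor
  · intro hx
    exact ⟨x.reverse, (rset_rev_mem Bad x.reverse i).mpr (by simpa using hx), by simp⟩
  · rintro ⟨u, hu, rfl⟩
    exact (rset_rev_mem Bad u i).mp hu

lemma rset_eq_rev_image (i : ℕ) :
    RSet Bad i = List.reverse '' LSet (fun w => Bad w.reverse) i := by
  ext x
  constructor
  · intro hx
    exact ⟨x.reverse, (lset_rev_mem Bad x.reverse i).mpr (by simpa using hx), by simp⟩
  · rintro ⟨u, hu, rfl⟩
    exact (lset_rev_mem Bad u i).mp hu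

lemma lset_ncard_eq (i : ℕ) :
    (LSet Bad i).ncard = (RSet (fun w => Bad w.reverse) i).ncard := by
  rw [lset_eq_rev_image, Set.ncard_image_of_injOn (List.reverse_injective.injOn)]

lemma rset_ncard_eq (i : ℕ) :
    (RSet Bad i).ncard = (LSet (fun w => Bad w.reverse) i).ncard := by
  rw [rset_eq_rev_image, Set.ncard_image_of_injOn (List.reverse_injective.injOn)]

include hR hL in
lemma bdd_iff :
    (∃ B : ℕ, ∀ i, (RSet Bad i).ncard ≤ B) ↔ (∃ B : ℕ, ∀ i, (LSet Bad i).ncard ≤ B) := by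
  have hR' : ∀ x y : List (Fin m), (fun w => Bad w.reverse) x → (fun w => Bad w.reverse) (x ++ y) := by
    intro x y hx
    show Bad ((x ++ y).reverse)
    rw [List.reverse_append]
    exact hL _ _ hx
  have hL' : ∀ x y : List (Fin m), (fun w => Bad w.reverse) y → (fun w => Bad w.reverse) (x ++ y) := by
    intro x y hy
    show Bad ((x ++ y).reverse)
    rw [List.reverse_append]
    exact hR _ _ hy
  constructor
  · rintro ⟨B, hB⟩
    exact main_bound Bad hR hL hB
  · rintro ⟨B, hB⟩
    obtain ⟨C, hC⟩ := main_bound (fun w => Bad w.reverse) hR' hL'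
      (B := B) (fun i => by rw [← lset_ncard_eq]; exact hB i)
    exact ⟨C, fun i => by rw [rset_ncard_eq]; exact hC i⟩

include hL in
lemma lcard_mono (i : ℕ) : (LSet Bad i).ncard ≤ (LSet Bad (i + 1)).ncard := by
  have hR' : ∀ x y : List (Fin m), (fun w => Bad w.reverse) x → (fun w => Bad w.reverse) (x ++ y) := by
    intro x y hx
    show Bad ((x ++ y).reverse)
    rw [List.reverse_append]
    exact hL _ _ hx
  rw [lset_ncard_eq, lset_ncard_eq]
  exact rcard_mono _ hR' i

lemma lin_iff_bdd (r : ℕ → ℕ) (hmono : ∀ i, r i ≤ r (i + 1)) :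
    (∃ C : ℕ, ∀ n, 1 ≤ n → (∑ i ∈ Finset.range (n + 1), r i) ≤ C * n) ↔
      (∃ B : ℕ, ∀ i, r i ≤ B) := by
  have hm : Monotone r := monotone_nat_of_le_succ hmono
  constructor
  · rintro ⟨C, hC⟩
    refine ⟨2 * C, fun i => ?_⟩
    have key : ∀ j, 1 ≤ j → r j ≤ 2 * C := by
      intro j hj
      have h1 : (j + 1) * r j ≤ C * (2 * j) := by
        calc (j + 1) * r j = ∑ _k ∈ Finset.Icc j (2 * j), r j := by
              rw [Finset.sum_const, Nat.card_Icc, smul_eq_mul]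
              congr 1
              omega
          _ ≤ ∑ k ∈ Finset.Icc j (2 * j), r k :=
              Finset.sum_le_sum (fun k hk => hm (Finset.mem_Icc.mp hk).1)
          _ ≤ ∑ k ∈ Finset.range (2 * j + 1), r k := by
              apply Finset.sum_le_sum_of_subset
              intro k hk
              rw [Finset.mem_range]
              have := (Finset.mem_Icc.mp hk).2
              omega
          _ ≤ C * (2 * j) := hC (2 * j) (by omega)
      have h2 : (j + 1) * r j ≤ (j + 1) * (2 * C) := by
        calc (j + 1) * r j ≤ C * (2 * j) := h1
          _ ≤ (j + 1) * (2 * C) := by ring_nf; nlinarith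
      exact Nat.le_of_mul_le_mul_left h2 (by omega)
    rcases Nat.eq_zero_or_pos i with hi | hi
    · subst hi
      exact le_trans (hmono 0) (key 1 le_rfl)
    · exact key i hi
  · rintro ⟨B, hB⟩
    refine ⟨2 * B, fun n hn => ?_⟩
    calc ∑ i ∈ Finset.range (n + 1), r i ≤ ∑ _i ∈ Finset.range (n + 1), B :=
          Finset.sum_le_sum (fun i _ => hB i)
      _ = (n + 1) * B := by rw [Finset.sum_const, Finset.card_range, smul_eq_mul]
      _ ≤ 2 * B * n := by nlinarith

end Comb


variable {m : ℕ}

section Alg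

open Classical

variable (W : Set (List (Fin m)))

def BadW : List (Fin m) → Prop := fun w => ∃ u ∈ W, u <:+: w

lemma badW_right : ∀ x y : List (Fin m), BadW W x → BadW W (x ++ y) := by
  rintro x y ⟨u, hu, s, t, rfl⟩
  exact ⟨u, hu, s, t ++ y, by simp⟩

lemma badW_left : ∀ x y : List (Fin m), BadW W y → BadW W (x ++ y) := by
  rintro x y ⟨u, hu, s, t, rfl⟩
  exact ⟨u, hu, x ++ s, t, by simp⟩

/-- The linear projection of the free algebra killing all "bad" monomials. -/
def projF : FreeAlg F m → FreeAlg F m :=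
  fun f => MonoidAlgebra.ofCoeff (Finsupp.filter (fun x : FreeMonoid (Fin m) => ¬ BadW W (FreeMonoid.toList x)) f.coeff)

lemma projF_apply_good (f : FreeAlg F m) {x : FreeMonoid (Fin m)}
    (hx : ¬ BadW W (FreeMonoid.toList x)) : (projF F W f).coeff x = f.coeff x :=
  Finsupp.filter_apply_pos _ _ hx

lemma projF_apply_bad (f : FreeAlg F m) {x : FreeMonoid (Fin m)}
    (hx : BadW W (FreeMonoid.toList x)) : (projF F W f).coeff x = 0 :=
  Finsupp.filter_apply_neg _ _ (not_not_intro hx)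

lemma projF_zero : projF F W 0 = 0 := by
  ext x
  simp [projF, Finsupp.filter_apply]

lemma projF_add (f g : FreeAlg F m) : projF F W (f + g) = projF F W f + projF F W g := by
  ext x
  simp only [projF, MonoidAlgebra.coeff_add, MonoidAlgebra.coeff_ofCoeff, Finsupp.add_apply,
    Finsupp.filter_apply]
  split <;> simp

lemma projF_sub (f g : FreeAlg F m) : projF F W (f - g) = projF F W f - projF F W g := by
  ext x
  simp only [projF, MonoidAlgebra.coeff_sub, MonoidAlgebra.coeff_ofCoeff, Finsupp.sub_apply,
    Finsupp.filter_apply]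
  split <;> simp

lemma projF_single_bad {u : List (Fin m)} (hu : BadW W u) (c : F) :
    projF F W (MonoidAlgebra.single (FreeMonoid.ofList u) c) = 0 := by
  ext x
  rcases eq_or_ne (FreeMonoid.ofList u) x with h | h
  · subst h
    exact projF_apply_bad F W _ hu
  · simp only [projF, MonoidAlgebra.coeff_ofCoeff, Finsupp.filter_apply]
    split <;> simp [MonoidAlgebra.coeff_single, Finsupp.single_apply, h]

lemma projF_single_good {u : List (Fin m)} (hu : ¬ BadW W u) (c : F) :
    projF F W (MonoidAlgebra.single (FreeMonoid.ofList u) c) = MonoidAlgebra.single (FreeMonoid.ofList u) c :=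
  congrArg MonoidAlgebra.ofCoeff (Finsupp.filter_single_of_pos (p := fun x : FreeMonoid (Fin m) => ¬ BadW W (FreeMonoid.toList x)) hu)

/-- bad-supported elements absorb multiplication. -/
lemma projF_mul_bad (f c : FreeAlg F m) (hf : ∀ x ∈ f.coeff.support, BadW W (FreeMonoid.toList x)) :
    projF F W (f * c) = 0 := by
  rw [projF, MonoidAlgebra.ofCoeff_eq_zero]
  apply (Finsupp.filter_eq_zero_iff _ _).mpr
  intro x hx
  by_contra hne
  have hx' : x ∈ (f * c).coeff.support := Finsupp.mem_support_iff.mpr hne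
  have hsub := MonoidAlgebra.support_coeff_mul_subset f c hx'
  rw [Finset.mem_mul] at hsub
  obtain ⟨y, hy, z, hz, rfl⟩ := hsub
  exact hx (badW_right W _ _ (hf y hy))

lemma projF_bad_mul (f c : FreeAlg F m) (hf : ∀ x ∈ f.coeff.support, BadW W (FreeMonoid.toList x)) :
    projF F W (c * f) = 0 := by
  rw [projF, MonoidAlgebra.ofCoeff_eq_zero]
  apply (Finsupp.filter_eq_zero_iff _ _).mpr
  intro x hx
  by_contra hne
  have hx' : x ∈ (c * f).coeff.support := Finsupp.mem_support_iff.mpr hne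
  have hsub := MonoidAlgebra.support_coeff_mul_subset c f hx'
  rw [Finset.mem_mul] at hsub
  obtain ⟨y, hy, z, hz, rfl⟩ := hsub
  exact hx (badW_left W _ _ (hf z hz))

lemma support_sub_proj_bad (f : FreeAlg F m) :
    ∀ x ∈ (f - projF F W f).coeff.support, BadW W (FreeMonoid.toList x) := by
  intro x hx
  by_contra hbad
  apply Finsupp.mem_support_iff.mp hx
  rw [MonoidAlgebra.coeff_sub, Finsupp.sub_apply, projF_apply_good F W f hbad, sub_self]

lemma projF_mul_proj (a c : FreeAlg F m) :
    projF F W (a * c) = projF F W (projF F W a * c) := by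
  have h1 : a * c - projF F W a * c = (a - projF F W a) * c := (sub_mul _ _ _).symm
  have h2 : projF F W (a * c - projF F W a * c) = 0 := by
    rw [h1]
    exact projF_mul_bad F W _ _ (support_sub_proj_bad F W a)
  rw [projF_sub] at h2
  exact sub_eq_zero.mp h2

lemma projF_proj_mul (a c : FreeAlg F m) :
    projF F W (c * a) = projF F W (c * projF F W a) := by
  have h1 : c * a - c * projF F W a = c * (a - projF F W a) := (mul_sub _ _ _).symm
  have h2 : projF F W (c * a - c * projF F W a) = 0 := by
    rw [h1]
    exact projF_bad_mul F W _ _ (support_sub_proj_bad F W a)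
  rw [projF_sub] at h2
  exact sub_eq_zero.mp h2

lemma rel_proj {a b : FreeAlg F m} (h : RingQuot.Rel (monRel F W) a b) :
    projF F W a = projF F W b := by
  induction h with
  | of h =>
    obtain ⟨⟨u, hu, rfl⟩, rfl⟩ := h
    rw [projF_zero]
    exact projF_single_bad F W ⟨u, hu, List.infix_refl u⟩ 1
  | add_left _ ih => rw [projF_add, projF_add, ih]
  | mul_left _ ih =>
    rename_i a' b' c' _
    rw [projF_mul_proj F W a', projF_mul_proj F W b', ih]
  | mul_right _ ih =>
    rename_i a' b' c' _
    rw [projF_proj_mul F W b', projF_proj_mul F W c', ih]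

lemma mkAlgHom_toQuot (a : FreeAlg F m) :
    (monAlgPi F W a).toQuot = Quot.mk (RingQuot.Rel (monRel F W)) a := by
  show (RingQuot.mkAlgHom F (monRel F W) a).toQuot = _
  rw [RingQuot.mkAlgHom_def]
  show (RingQuot.mkRingHom (monRel F W) a).toQuot = _
  rw [RingQuot.mkRingHom_def]
  rfl

lemma pi_single_bad {u : List (Fin m)} (hu : BadW W u) (c : F) :
    monAlgPi F W (MonoidAlgebra.single (FreeMonoid.ofList u) c) = 0 := by
  obtain ⟨w, hw, s, t, rfl⟩ := hu
  have hsplit : (MonoidAlgebra.single (FreeMonoid.ofList (s ++ w ++ t)) c : FreeAlg F m)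
      = MonoidAlgebra.single (FreeMonoid.ofList s) c * wordElem F w
        * MonoidAlgebra.single (FreeMonoid.ofList t) (1 : F) := by
    simp only [wordElem, MonoidAlgebra.of_apply, MonoidAlgebra.single_mul_single]
    rw [mul_one, mul_one, ← FreeMonoid.ofList_append, ← FreeMonoid.ofList_append]
  rw [hsplit, map_mul, map_mul]
  have hzero : monAlgPi F W (wordElem F w) = 0 := by
    have := RingQuot.mkAlgHom_rel (S := F) (s := monRel F W)
      (x := wordElem F w) (y := 0) ⟨⟨w, hw, rfl⟩, rfl⟩
    rw [monAlgPi, this, map_zero]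
  rw [hzero, mul_zero, zero_mul]

lemma pi_bad_supported (f : FreeAlg F m)
    (hf : ∀ x ∈ f.coeff.support, BadW W (FreeMonoid.toList x)) : monAlgPi F W f = 0 := by
  have hrepr : f = ∑ x ∈ f.coeff.support, MonoidAlgebra.single x (f.coeff x) := by
    conv_lhs => rw [← MonoidAlgebra.sum_coeff_single f]
    rfl
  rw [hrepr, map_sum]
  apply Finset.sum_eq_zero
  intro x hx
  have : x = FreeMonoid.ofList (FreeMonoid.toList x) := rfl
  rw [this]
  exact pi_single_bad F W (hf x hx) _

lemma pi_proj (f : FreeAlg F m) : monAlgPi F W f = monAlgPi F W (projF F W f) := by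
  have h1 : monAlgPi F W (f - projF F W f) = 0 :=
    pi_bad_supported F W _ (support_sub_proj_bad F W f)
  rw [map_sub] at h1
  exact sub_eq_zero.mp h1

lemma proj_of_eqvGen {a b : FreeAlg F m}
    (h : Relation.EqvGen (RingQuot.Rel (monRel F W)) a b) : projF F W a = projF F W b := by
  induction h with
  | rel x y hxy => exact rel_proj F W hxy
  | refl x => rfl
  | symm x y _ ih => exact ih.symm
  | trans x y z _ _ ih1 ih2 => exact ih1.trans ih2

/-- KEY: equality in the monomial algebra is detected by the projection. -/
lemma pi_eq_iff (f g : FreeAlg F m) :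
    monAlgPi F W f = monAlgPi F W g ↔ projF F W f = projF F W g := by
  constructor
  · intro h
    have hq : Quot.mk (RingQuot.Rel (monRel F W)) f = Quot.mk (RingQuot.Rel (monRel F W)) g := by
      rw [← mkAlgHom_toQuot, ← mkAlgHom_toQuot, h]
    exact proj_of_eqvGen F W (Quot.eqvGen_exact hq)
  · intro h
    rw [pi_proj F W f, pi_proj F W g, h]

lemma mono_eq_zero_iff (u : List (Fin m)) : mono F W u = 0 ↔ BadW W u := by
  constructor
  · intro h
    by_contra hbad
    have h0 : monAlgPi F W (wordElem F u) = monAlgPi F W 0 := by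
      rw [map_zero]; exact h
    have := (pi_eq_iff F W _ _).mp h0
    rw [projF_zero] at this
    rw [wordElem, MonoidAlgebra.of_apply] at this
    rw [projF_single_good F W hbad 1] at this
    exact (one_ne_zero : (1:F) ≠ 0) (MonoidAlgebra.single_eq_zero.mp this)
  · intro h
    have : mono F W u = monAlgPi F W (MonoidAlgebra.single (FreeMonoid.ofList u) (1:F)) := rfl
    rw [this, pi_single_bad F W h 1]

lemma mono_mul (u v : List (Fin m)) : mono F W u * mono F W v = mono F W (u ++ v) := by
  rw [mono, mono, mono, ← map_mul]
  congr 1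
  simp only [wordElem, MonoidAlgebra.of_apply, MonoidAlgebra.single_mul_single, one_mul,
    FreeMonoid.ofList_append]

lemma mono_mem_homog (u : List (Fin m)) (d : ℕ) (hu : u.length = d) :
    mono F W u ∈ homog F W d :=
  Submodule.subset_span ⟨u, hu, rfl⟩

end Alg


section Absorb

open Classical

variable (W : Set (List (Fin m)))

lemma mul_homog_zero_mono {f : MonAlg F W} {d : ℕ}
    (h : ∀ v : List (Fin m), v.length = d → f * mono F W v = 0) :
    ∀ g ∈ homog F W d, f * g = 0 := by
  intro g hg
  refine Submodule.span_induction (p := fun g _ => f * g = 0) ?_ ?_ ?_ ?_ hg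
  · rintro x ⟨v, hv, rfl⟩
    exact h v hv
  · exact mul_zero f
  · intro x y _ _ hx hy
    rw [mul_add, hx, hy, add_zero]
  · intro a x _ hx
    rw [mul_smul_comm, hx, smul_zero]

lemma homog_mul_zero_mono {f : MonAlg F W} {d : ℕ}
    (h : ∀ v : List (Fin m), v.length = d → mono F W v * f = 0) :
    ∀ g ∈ homog F W d, g * f = 0 := by
  intro g hg
  refine Submodule.span_induction (p := fun g _ => g * f = 0) ?_ ?_ ?_ ?_ hg
  · rintro x ⟨v, hv, rfl⟩
    exact h v hv
  · exact zero_mul f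
  · intro x y _ _ hx hy
    rw [add_mul, hx, hy, add_zero]
  · intro a x _ hx
    rw [smul_mul_assoc, hx, smul_zero]

lemma proR_absorb {f : MonAlg F W} {d d' : ℕ} (hd : d ≤ d')
    (h : ∀ g ∈ homog F W d, f * g = 0) :
    ∀ g ∈ homog F W d', f * g = 0 := by
  apply mul_homog_zero_mono
  intro v hv
  have hsplit : mono F W v = mono F W (v.take d) * mono F W (v.drop d) := by
    rw [mono_mul, List.take_append_drop]
  rw [hsplit, ← mul_assoc,
    h _ (mono_mem_homog F W _ d (by rw [List.length_take, hv]; omega)), zero_mul]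

lemma proL_absorb {f : MonAlg F W} {d d' : ℕ} (hd : d ≤ d')
    (h : ∀ g ∈ homog F W d, g * f = 0) :
    ∀ g ∈ homog F W d', g * f = 0 := by
  apply homog_mul_zero_mono
  intro v hv
  have hsplit : mono F W v = mono F W (v.take (d' - d)) * mono F W (v.drop (d' - d)) := by
    rw [mono_mul, List.take_append_drop]
  rw [hsplit, mul_assoc,
    h _ (mono_mem_homog F W _ d (by rw [List.length_drop, hv]; omega)), mul_zero]

def proRSub : Submodule F (MonAlg F W) where
  carrier := proSet F (MonAlg F W) (homog F W)
  zero_mem' := ⟨1, le_rfl, fun g _ => zero_mul g⟩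
  add_mem' := by
    rintro a b ⟨d1, hd1, h1⟩ ⟨d2, hd2, h2⟩
    refine ⟨max d1 d2, le_trans hd1 (le_max_left _ _), fun g hg => ?_⟩
    rw [add_mul, proR_absorb F W (le_max_left d1 d2) h1 g hg,
      proR_absorb F W (le_max_right d1 d2) h2 g hg, add_zero]
  smul_mem' := by
    rintro c a ⟨d, hd, h⟩
    exact ⟨d, hd, fun g hg => by rw [smul_mul_assoc, h g hg, smul_zero]⟩

def proLSub : Submodule F (MonAlg F W) where
  carrier := proSetLeft F (MonAlg F W) (homog F W)
  zero_mem' := ⟨1, le_rfl, fun g _ => mul_zero g⟩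
  add_mem' := by
    rintro a b ⟨d1, hd1, h1⟩ ⟨d2, hd2, h2⟩
    refine ⟨max d1 d2, le_trans hd1 (le_max_left _ _), fun g hg => ?_⟩
    rw [mul_add, proL_absorb F W (le_max_left d1 d2) h1 g hg,
      proL_absorb F W (le_max_right d1 d2) h2 g hg, add_zero]
  smul_mem' := by
    rintro c a ⟨d, hd, h⟩
    exact ⟨d, hd, fun g hg => by rw [mul_smul_comm, h g hg, smul_zero]⟩

lemma span_proR : Submodule.span F (proSet F (MonAlg F W) (homog F W)) = proRSub F W :=
  Submodule.span_eq (proRSub F W)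

lemma span_proL : Submodule.span F (proSetLeft F (MonAlg F W) (homog F W)) = proLSub F W :=
  Submodule.span_eq (proLSub F W)

end Absorb



section Count

open Classical

variable (F : Type) [Field F] {m : ℕ} (W : Set (List (Fin m)))

lemma mono_mem_proR {u : List (Fin m)} (h : ¬ ExtR (BadW W) u) :
    mono F W u ∈ proSet F (MonAlg F W) (homog F W) := by
  unfold ExtR at h
  push_neg at h
  obtain ⟨d0, hd0⟩ := h
  refine ⟨d0 + 1, by omega, ?_⟩
  apply mul_homog_zero_mono
  intro v hv
  rw [mono_mul, (mono_eq_zero_iff F W _).mpr ?_]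
  have h1 : BadW W (u ++ v.take d0) := hd0 _ (by rw [List.length_take, hv]; omega)
  have h2 := badW_right W _ (v.drop d0) h1
  rwa [List.append_assoc, List.take_append_drop] at h2

lemma mono_mem_proL {u : List (Fin m)} (h : ¬ ExtL (BadW W) u) :
    mono F W u ∈ proSetLeft F (MonAlg F W) (homog F W) := by
  unfold ExtL at h
  push_neg at h
  obtain ⟨d0, hd0⟩ := h
  refine ⟨d0 + 1, by omega, ?_⟩
  apply homog_mul_zero_mono
  intro v hv
  rw [mono_mul, (mono_eq_zero_iff F W _).mpr ?_]
  have h1 : BadW W (v.drop 1 ++ u) := hd0 _ (by rw [List.length_drop, hv]; omega)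
  have h2 := badW_left W (v.take 1) _ h1
  rwa [← List.append_assoc, List.take_append_drop] at h2

lemma finrank_map_right (i : ℕ) :
    Module.finrank F
        ((homog F W i).map (Submodule.span F (proSet F (MonAlg F W) (homog F W))).mkQ)
      = (RSet (BadW W) i).ncard := by
  set P := Submodule.span F (proSet F (MonAlg F W) (homog F W)) with hP
  set Qm := P.mkQ with hQm
  set S := RSet (BadW W) i with hS
  have hfin : S.Finite := finite_RSet _ i
  have himgfin : ((fun u => Qm (mono F W u)) '' S).Finite := hfin.image _
  have hQzero : ∀ u : List (Fin m), ¬ ExtR (BadW W) u → Qm (mono F W u) = 0 := by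
    intro u hu
    rw [hQm, Submodule.mkQ_apply, Submodule.Quotient.mk_eq_zero]
    exact hP ▸ Submodule.subset_span (mono_mem_proR F W hu)
  have heq : (homog F W i).map Qm = Submodule.span F ((fun u => Qm (mono F W u)) '' S) := by
    rw [homog, Submodule.map_span]
    apply le_antisymm
    · rw [Submodule.span_le]
      rintro _ ⟨a, ⟨u, hu, rfl⟩, rfl⟩
      by_cases hext : ExtR (BadW W) u
      · exact Submodule.subset_span ⟨u, ⟨hu, hext⟩, rfl⟩
      · rw [hQzero u hext]
        exact Submodule.zero_mem _
    · rw [Submodule.span_le]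
      rintro _ ⟨u, hu, rfl⟩
      exact Submodule.subset_span ⟨mono F W u, ⟨u, hu.1, rfl⟩, rfl⟩
  have hupper : Module.finrank F ((homog F W i).map Qm) ≤ S.ncard := by
    rw [heq]
    haveI := himgfin.fintype
    refine le_trans (finrank_span_le_card _) ?_
    rw [← Set.ncard_eq_toFinset_card']
    exact Set.ncard_image_le hfin
  haveI hfd : Module.Finite F ((homog F W i).map Qm) := by
    rw [heq]
    exact FiniteDimensional.span_of_finite F himgfin
  have hlower : S.ncard ≤ Module.finrank F ((homog F W i).map Qm) := by
    haveI : Fintype S := hfin.fintype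
    have hli : LinearIndependent F (fun u : S => Qm (mono F W u.1)) := by
      rw [Fintype.linearIndependent_iff]
      intro c hc
      by_contra hne
      push_neg at hne
      obtain ⟨u0, hu0⟩ := hne
      have hmem : (∑ u : S, c u • mono F W u.1) ∈ P := by
        rw [← Submodule.Quotient.mk_eq_zero, ← Submodule.mkQ_apply, ← hQm, map_sum]
        simp_rw [map_smul]
        exact hc
      rw [hP, span_proR] at hmem
      obtain ⟨d, hd1, hmul⟩ := hmem
      obtain ⟨v0, hv0len, hv0good⟩ := u0.2.2 d
      have hz := hmul (mono F W v0) (mono_mem_homog F W v0 d hv0len)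
      rw [Finset.sum_mul] at hz
      simp_rw [smul_mul_assoc, mono_mul] at hz
      have hz2 : monAlgPi F W
          (∑ u : S, c u • MonoidAlgebra.single (FreeMonoid.ofList (u.1 ++ v0)) (1 : F))
          = monAlgPi F W 0 := by
        rw [map_zero, map_sum]
        simp_rw [map_smul]
        have hm : ∀ u : S, monAlgPi F W (MonoidAlgebra.single (FreeMonoid.ofList (u.1 ++ v0)) (1:F))
            = mono F W (u.1 ++ v0) := by
          intro u
          rw [mono, wordElem, MonoidAlgebra.of_apply]
        simp_rw [hm]
        exact hz
      have hproj := (pi_eq_iff F W _ _).mp hz2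
      rw [projF_zero] at hproj
      have heval := congrArg (fun h : FreeAlg F m => h.coeff (FreeMonoid.ofList (u0.1 ++ v0))) hproj
      simp only [MonoidAlgebra.coeff_zero, Finsupp.coe_zero, Pi.zero_apply] at heval
      rw [projF_apply_good F W _ (by simpa using hv0good)] at heval
      rw [MonoidAlgebra.coeff_sum, Finset.sum_apply'] at heval
      have hterm : ∀ u : S, u ≠ u0 →
          (c u • MonoidAlgebra.single (FreeMonoid.ofList (u.1 ++ v0)) (1:F)).coeff
            (FreeMonoid.ofList (u0.1 ++ v0)) = 0 := by
        intro u hu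
        rw [MonoidAlgebra.coeff_smul_apply, MonoidAlgebra.coeff_single, Finsupp.single_apply]
        rw [if_neg, smul_zero]
        intro hcontra
        apply hu
        have : u.1 ++ v0 = u0.1 ++ v0 := congrArg FreeMonoid.toList hcontra
        exact Subtype.ext (List.append_cancel_right this)
      rw [Finset.sum_eq_single u0 (fun u _ hu => hterm u hu)
        (fun h => absurd (Finset.mem_univ u0) h)] at heval
      rw [MonoidAlgebra.coeff_smul_apply, MonoidAlgebra.coeff_single, Finsupp.single_apply, if_pos rfl, smul_eq_mul, mul_one] at heval
      exact hu0 heval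
    have hli2 : LinearIndependent F
        (fun u : S => (⟨Qm (mono F W u.1),
          Submodule.mem_map_of_mem (mono_mem_homog F W u.1 i u.2.1)⟩ :
            ((homog F W i).map Qm))) := by
      apply LinearIndependent.of_comp ((homog F W i).map Qm).subtype
      exact hli
    have hcard := hli2.fintype_card_le_finrank
    rwa [← Nat.card_coe_set_eq, Nat.card_eq_fintype_card]
  exact le_antisymm hupper hlower

lemma finrank_map_left (i : ℕ) :
    Module.finrank F
        ((homog F W i).map (Submodule.span F (proSetLeft F (MonAlg F W) (homog F W))).mkQ)
      = (LSet (BadW W) i).ncard := by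
  set P := Submodule.span F (proSetLeft F (MonAlg F W) (homog F W)) with hP
  set Qm := P.mkQ with hQm
  set S := LSet (BadW W) i with hS
  have hfin : S.Finite := finite_LSet _ i
  have himgfin : ((fun u => Qm (mono F W u)) '' S).Finite := hfin.image _
  have hQzero : ∀ u : List (Fin m), ¬ ExtL (BadW W) u → Qm (mono F W u) = 0 := by
    intro u hu
    rw [hQm, Submodule.mkQ_apply, Submodule.Quotient.mk_eq_zero]
    exact hP ▸ Submodule.subset_span (mono_mem_proL F W hu)
  have heq : (homog F W i).map Qm = Submodule.span F ((fun u => Qm (mono F W u)) '' S) := by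
    rw [homog, Submodule.map_span]
    apply le_antisymm
    · rw [Submodule.span_le]
      rintro _ ⟨a, ⟨u, hu, rfl⟩, rfl⟩
      by_cases hext : ExtL (BadW W) u
      · exact Submodule.subset_span ⟨u, ⟨hu, hext⟩, rfl⟩
      · rw [hQzero u hext]
        exact Submodule.zero_mem _
    · rw [Submodule.span_le]
      rintro _ ⟨u, hu, rfl⟩
      exact Submodule.subset_span ⟨mono F W u, ⟨u, hu.1, rfl⟩, rfl⟩
  have hupper : Module.finrank F ((homog F W i).map Qm) ≤ S.ncard := by
    rw [heq]
    haveI := himgfin.fintype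
    refine le_trans (finrank_span_le_card _) ?_
    rw [← Set.ncard_eq_toFinset_card']
    exact Set.ncard_image_le hfin
  haveI hfd : Module.Finite F ((homog F W i).map Qm) := by
    rw [heq]
    exact FiniteDimensional.span_of_finite F himgfin
  have hlower : S.ncard ≤ Module.finrank F ((homog F W i).map Qm) := by
    haveI : Fintype S := hfin.fintype
    have hli : LinearIndependent F (fun u : S => Qm (mono F W u.1)) := by
      rw [Fintype.linearIndependent_iff]
      intro c hc
      by_contra hne
      push_neg at hne
      obtain ⟨u0, hu0⟩ := hne
      have hmem : (∑ u : S, c u • mono F W u.1) ∈ P := by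
        rw [← Submodule.Quotient.mk_eq_zero, ← Submodule.mkQ_apply, ← hQm, map_sum]
        simp_rw [map_smul]
        exact hc
      rw [hP, span_proL] at hmem
      obtain ⟨d, hd1, hmul⟩ := hmem
      obtain ⟨v0, hv0len, hv0good⟩ := u0.2.2 d
      have hz := hmul (mono F W v0) (mono_mem_homog F W v0 d hv0len)
      rw [Finset.mul_sum] at hz
      simp_rw [mul_smul_comm, mono_mul] at hz
      have hz2 : monAlgPi F W
          (∑ u : S, c u • MonoidAlgebra.single (FreeMonoid.ofList (v0 ++ u.1)) (1 : F))
          = monAlgPi F W 0 := by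
        rw [map_zero, map_sum]
        simp_rw [map_smul]
        have hm : ∀ u : S, monAlgPi F W (MonoidAlgebra.single (FreeMonoid.ofList (v0 ++ u.1)) (1:F))
            = mono F W (v0 ++ u.1) := by
          intro u
          rw [mono, wordElem, MonoidAlgebra.of_apply]
        simp_rw [hm]
        exact hz
      have hproj := (pi_eq_iff F W _ _).mp hz2
      rw [projF_zero] at hproj
      have heval := congrArg (fun h : FreeAlg F m => h.coeff (FreeMonoid.ofList (v0 ++ u0.1))) hproj
      simp only [MonoidAlgebra.coeff_zero, Finsupp.coe_zero, Pi.zero_apply] at heval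
      rw [projF_apply_good F W _ (by simpa using hv0good)] at heval
      rw [MonoidAlgebra.coeff_sum, Finset.sum_apply'] at heval
      have hterm : ∀ u : S, u ≠ u0 →
          (c u • MonoidAlgebra.single (FreeMonoid.ofList (v0 ++ u.1)) (1:F)).coeff
            (FreeMonoid.ofList (v0 ++ u0.1)) = 0 := by
        intro u hu
        rw [MonoidAlgebra.coeff_smul_apply, MonoidAlgebra.coeff_single, Finsupp.single_apply]
        rw [if_neg, smul_zero]
        intro hcontra
        apply hu
        have : v0 ++ u.1 = v0 ++ u0.1 := congrArg FreeMonoid.toList hcontra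
        exact Subtype.ext (List.append_cancel_left this)
      rw [Finset.sum_eq_single u0 (fun u _ hu => hterm u hu)
        (fun h => absurd (Finset.mem_univ u0) h)] at heval
      rw [MonoidAlgebra.coeff_smul_apply, MonoidAlgebra.coeff_single, Finsupp.single_apply, if_pos rfl, smul_eq_mul, mul_one] at heval
      exact hu0 heval
    have hli2 : LinearIndependent F
        (fun u : S => (⟨Qm (mono F W u.1),
          Submodule.mem_map_of_mem (mono_mem_homog F W u.1 i u.2.1)⟩ :
            ((homog F W i).map Qm))) := by
      apply LinearIndependent.of_comp ((homog F W i).map Qm).subtype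
      exact hli
    have hcard := hli2.fintype_card_le_finrank
    rwa [← Nat.card_coe_set_eq, Nat.card_eq_fintype_card]
  exact le_antisymm hupper hlower

end Count

/-- For a finitely generated infinite-dimensional monomial algebra
`A`, the quotient `A/pro_l(A)` has linear growth if and only if `A/pro_r(A)` has
linear growth. -/
theorem statement9 (F : Type) [Field F] (m : ℕ) (W : Set (List (Fin m)))
    (hinf : ¬ Module.Finite F (MonAlg F W)) :
    (∃ C : ℕ, ∀ n : ℕ, 1 ≤ n →
        quotGrowth F W (proSetLeft F (MonAlg F W) (homog F W)) n ≤ C * n) ↔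
      (∃ C : ℕ, ∀ n : ℕ, 1 ≤ n →
        quotGrowth F W (proSet F (MonAlg F W) (homog F W)) n ≤ C * n) := by
  have hR := badW_right W
  have hL := badW_left W
  have hql : ∀ n, quotGrowth F W (proSetLeft F (MonAlg F W) (homog F W)) n
      = ∑ i ∈ Finset.range (n + 1), (LSet (BadW W) i).ncard := by
    intro n
    unfold quotGrowth
    exact Finset.sum_congr rfl (fun i _ => finrank_map_left F W i)
  have hqr : ∀ n, quotGrowth F W (proSet F (MonAlg F W) (homog F W)) n
      = ∑ i ∈ Finset.range (n + 1), (RSet (BadW W) i).ncard := by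
    intro n
    unfold quotGrowth
    exact Finset.sum_congr rfl (fun i _ => finrank_map_right F W i)
  constructor
  · rintro ⟨C, hC⟩
    have h1 : ∃ B : ℕ, ∀ i, (LSet (BadW W) i).ncard ≤ B := by
      apply (lin_iff_bdd _ (fun i => lcard_mono (BadW W) hL i)).mp
      exact ⟨C, fun n hn => by rw [← hql]; exact hC n hn⟩
    have h2 : ∃ B : ℕ, ∀ i, (RSet (BadW W) i).ncard ≤ B := (bdd_iff (BadW W) hR hL).mpr h1
    obtain ⟨C', hC'⟩ := (lin_iff_bdd _ (fun i => rcard_mono (BadW W) hR i)).mpr h2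
    exact ⟨C', fun n hn => by rw [hqr]; exact hC' n hn⟩
  · rintro ⟨C, hC⟩
    have h1 : ∃ B : ℕ, ∀ i, (RSet (BadW W) i).ncard ≤ B := by
      apply (lin_iff_bdd _ (fun i => rcard_mono (BadW W) hR i)).mp
      exact ⟨C, fun n hn => by rw [← hqr]; exact hC n hn⟩
    have h2 : ∃ B : ℕ, ∀ i, (LSet (BadW W) i).ncard ≤ B := (bdd_iff (BadW W) hR hL).mp h1
    obtain ⟨C', hC'⟩ := (lin_iff_bdd _ (fun i => lcard_mono (BadW W) hL i)).mpr h2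
    exact ⟨C', fun n hn => by rw [hql]; exact hC' n hn⟩
end
end

section
/- Let A be a connected ℕ-graded F-algebra generated in degree 1 with dim_F A_1 < ∞, and let M = ⊕_{i≥0} F·v_i and M' = ⊕_{i≥0} F·w_i be point A-modules. Then every isomorphism φ : M → M' of (ungraded) right A-modules is graded of degree 0; that is, φ(M_i) = M'_i for every i ≥ 0. -/
noncomputable section

/-- Let `A` be a connected ℕ-graded `F`-algebra generated in
degree `1` with `dim_F A_1 < ∞`, and let `M = ⊕ F·v_i` and `M' = ⊕ F·v'_i` be right
point `A`-modules (right modules are modules over `Aᵐᵒᵖ`).  Then every isomorphism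
`φ : M → M'` of ungraded right `A`-modules is graded of degree `0`; since the
homogeneous components are the lines `F·v_i` and `F·v'_i`, this says that
`φ (v i) = c • v' i` for a nonzero scalar `c`. -/
theorem statement10 (F : Type) [Field F] (A : Type) [Ring A] [Algebra F A]
    (𝒜 : ℕ → Submodule F A) [GradedAlgebra 𝒜]
    (hconn : 𝒜 0 = Submodule.span F {1})
    (hgen : ∀ n : ℕ, 𝒜 (n + 1) = 𝒜 1 * 𝒜 n ∧ 𝒜 (n + 1) = 𝒜 n * 𝒜 1)
    (hfin1 : Module.Finite F (𝒜 1))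
    (M : Type) [AddCommGroup M] [Module F M] [Module Aᵐᵒᵖ M] [IsScalarTower F Aᵐᵒᵖ M]
    (M' : Type) [AddCommGroup M'] [Module F M'] [Module Aᵐᵒᵖ M'] [IsScalarTower F Aᵐᵒᵖ M']
    (v : ℕ → M) (v' : ℕ → M')
    -- the `v i` (resp. `v' i`) form an `F`-basis, so each homogeneous component
    -- `F·v i` is one-dimensional:
    (hind : LinearIndependent F v) (hspan : Submodule.span F (Set.range v) = ⊤)
    (hind' : LinearIndependent F v') (hspan' : Submodule.span F (Set.range v') = ⊤)
    -- the modules are graded: `v i · A_d ⊆ F · v (i+d)`: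
    (hgr : ∀ (i d : ℕ), ∀ x ∈ 𝒜 d, ∃ c : F, MulOpposite.op x • v i = c • v (i + d))
    (hgr' : ∀ (i d : ℕ), ∀ x ∈ 𝒜 d, ∃ c : F, MulOpposite.op x • v' i = c • v' (i + d))
    -- the modules are generated in degree `0` by `v 0` (resp. `v' 0`):
    (hcyc : ∀ x : M, ∃ a : A, MulOpposite.op a • v 0 = x)
    (hcyc' : ∀ x : M', ∃ a : A, MulOpposite.op a • v' 0 = x)
    -- `φ` is an isomorphism of (ungraded) right `A`-modules:
    (φ : M ≃ₗ[Aᵐᵒᵖ] M') :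
    ∀ i : ℕ, ∃ c : F, c ≠ 0 ∧ φ (v i) = c • v' i := by
  classical
  -- scalar commutation
  have hcM : ∀ (a : A) (f : F) (w : M),
      MulOpposite.op a • (f • w) = f • (MulOpposite.op a • w) := by
    intro a f w
    rw [← algebraMap_smul Aᵐᵒᵖ f w, ← mul_smul, ← algebraMap_smul Aᵐᵒᵖ f (MulOpposite.op a • w),
      ← mul_smul, MulOpposite.algebraMap_apply, ← MulOpposite.op_mul, ← MulOpposite.op_mul,
      Algebra.commutes]
  have hcM' : ∀ (a : A) (f : F) (w : M'),
      MulOpposite.op a • (f • w) = f • (MulOpposite.op a • w) := by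
    intro a f w
    rw [← algebraMap_smul Aᵐᵒᵖ f w, ← mul_smul, ← algebraMap_smul Aᵐᵒᵖ f (MulOpposite.op a • w),
      ← mul_smul, MulOpposite.algebraMap_apply, ← MulOpposite.op_mul, ← MulOpposite.op_mul,
      Algebra.commutes]
  -- F-semilinearity of φ and φ.symm
  have hφs : ∀ (f : F) (m : M), φ (f • m) = f • φ m := by
    intro f m
    rw [← algebraMap_smul Aᵐᵒᵖ f m, map_smul, algebraMap_smul]
  have hφs' : ∀ (f : F) (m : M'), φ.symm (f • m) = f • φ.symm m := by
    intro f m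
    rw [← algebraMap_smul Aᵐᵒᵖ f m, map_smul, algebraMap_smul]
  -- bases
  set b : Module.Basis ℕ F M := Module.Basis.mk hind hspan.ge with hbdef
  set b' : Module.Basis ℕ F M' := Module.Basis.mk hind' hspan'.ge with hb'def
  have hb : ∀ i, b i = v i := fun i => Module.Basis.mk_apply _ _ i
  have hb' : ∀ i, b' i = v' i := fun i => Module.Basis.mk_apply _ _ i
  have hbc : ⇑b = v := Module.Basis.coe_mk _ _
  have hb'c : ⇑b' = v' := Module.Basis.coe_mk _ _
  have hne : ∀ n, v n ≠ 0 := fun n => hb n ▸ b.ne_zero n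
  have hne' : ∀ n, v' n ≠ 0 := fun n => hb' n ▸ b'.ne_zero n
  have hopsum : ∀ (t : Finset ℕ) (f : ℕ → A),
      MulOpposite.op (∑ d ∈ t, f d) = ∑ d ∈ t, MulOpposite.op (f d) := by
    intro t f
    classical
    induction t using Finset.induction with
    | empty => simp
    | insert _ _ h ih => rw [Finset.sum_insert h, Finset.sum_insert h, MulOpposite.op_add, ih]
  -- expansions
  have hexpand : ∀ x : M, x = ∑ j ∈ (b.repr x).support, (b.repr x) j • v j := by
    intro x
    conv_lhs => rw [← b.linearCombination_repr x]
    rw [Finsupp.linearCombination_apply, Finsupp.sum]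
    exact Finset.sum_congr rfl fun j _ => by rw [hb]
  have hexpand' : ∀ x : M', x = ∑ j ∈ (b'.repr x).support, (b'.repr x) j • v' j := by
    intro x
    conv_lhs => rw [← b'.linearCombination_repr x]
    rw [Finsupp.linearCombination_apply, Finsupp.sum]
    exact Finset.sum_congr rfl fun j _ => by rw [hb']
  -- homogeneous smul lands in high-degree span
  have hsm : ∀ (d : ℕ) (a : A), a ∈ 𝒜 d → ∀ w : M,
      MulOpposite.op a • w ∈ Submodule.span F (v '' Set.Ici d) := by
    intro d a ha w
    have hw : w ∈ Submodule.span F (Set.range v) := by rw [hspan]; trivial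
    induction hw using Submodule.span_induction with
    | mem x hx =>
        obtain ⟨j, rfl⟩ := hx
        obtain ⟨c, hc⟩ := hgr j d a ha
        rw [hc]
        exact Submodule.smul_mem _ _
          (Submodule.subset_span ⟨j + d, Nat.le_add_left d j, rfl⟩)
    | zero => rw [smul_zero]; exact Submodule.zero_mem _
    | add x y _ _ hx hy => rw [smul_add]; exact Submodule.add_mem _ hx hy
    | smul f x _ hx => rw [hcM a f x]; exact Submodule.smul_mem _ _ hx
  have hsm' : ∀ (d : ℕ) (a : A), a ∈ 𝒜 d → ∀ w : M',
      MulOpposite.op a • w ∈ Submodule.span F (v' '' Set.Ici d) := by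
    intro d a ha w
    have hw : w ∈ Submodule.span F (Set.range v') := by rw [hspan']; trivial
    induction hw using Submodule.span_induction with
    | mem x hx =>
        obtain ⟨j, rfl⟩ := hx
        obtain ⟨c, hc⟩ := hgr' j d a ha
        rw [hc]
        exact Submodule.smul_mem _ _
          (Submodule.subset_span ⟨j + d, Nat.le_add_left d j, rfl⟩)
    | zero => rw [smul_zero]; exact Submodule.zero_mem _
    | add x y _ _ hx hy => rw [smul_add]; exact Submodule.add_mem _ hx hy
    | smul f x _ hx => rw [hcM' a f x]; exact Submodule.smul_mem _ _ hx
  -- homogeneous generators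
  have hL0 : ∀ n : ℕ, ∃ a ∈ 𝒜 n, MulOpposite.op a • v 0 = v n := by
    intro n
    obtain ⟨a, ha⟩ := hcyc (v n)
    choose c hc using fun d => hgr 0 d (DirectSum.decompose 𝒜 a d : A) (SetLike.coe_mem _)
    simp only [zero_add] at hc
    have hsum : v n = ∑ d ∈ (DirectSum.decompose 𝒜 a).support, c d • v d := by
      conv_lhs => rw [← ha, ← DirectSum.sum_support_decompose 𝒜 a]
      rw [hopsum, Finset.sum_smul]
      exact Finset.sum_congr rfl fun d _ => hc d
    have hrep : (1 : F) = if n ∈ (DirectSum.decompose 𝒜 a).support then c n else 0 := by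
      have h0 := congrArg (fun f : ℕ →₀ F => f n) (congrArg b.repr hsum)
      rw [← hb n, b.repr_self] at h0
      simpa only [map_sum, map_smul, ← hb, b.repr_self, Finsupp.coe_finset_sum,
        Finset.sum_apply, Finsupp.smul_apply, Finsupp.single_apply, smul_eq_mul,
        mul_ite, mul_one, mul_zero, Finset.sum_ite_eq', if_true, eq_self_iff_true] using h0
    by_cases hn : n ∈ (DirectSum.decompose 𝒜 a).support
    · refine ⟨DirectSum.decompose 𝒜 a n, SetLike.coe_mem _, ?_⟩
      rw [if_pos hn] at hrep
      rw [hc n, ← hrep, one_smul]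
    · rw [if_neg hn] at hrep
      exact absurd hrep one_ne_zero
  have hL0' : ∀ n : ℕ, ∃ a ∈ 𝒜 n, MulOpposite.op a • v' 0 = v' n := by
    intro n
    obtain ⟨a, ha⟩ := hcyc' (v' n)
    choose c hc using fun d => hgr' 0 d (DirectSum.decompose 𝒜 a d : A) (SetLike.coe_mem _)
    simp only [zero_add] at hc
    have hsum : v' n = ∑ d ∈ (DirectSum.decompose 𝒜 a).support, c d • v' d := by
      conv_lhs => rw [← ha, ← DirectSum.sum_support_decompose 𝒜 a]
      rw [hopsum, Finset.sum_smul]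
      exact Finset.sum_congr rfl fun d _ => hc d
    have hrep : (1 : F) = if n ∈ (DirectSum.decompose 𝒜 a).support then c n else 0 := by
      have h0 := congrArg (fun f : ℕ →₀ F => f n) (congrArg b'.repr hsum)
      rw [← hb' n, b'.repr_self] at h0
      simpa only [map_sum, map_smul, ← hb', b'.repr_self, Finsupp.coe_finset_sum,
        Finset.sum_apply, Finsupp.smul_apply, Finsupp.single_apply, smul_eq_mul,
        mul_ite, mul_one, mul_zero, Finset.sum_ite_eq', if_true, eq_self_iff_true] using h0
    by_cases hn : n ∈ (DirectSum.decompose 𝒜 a).support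
    · refine ⟨DirectSum.decompose 𝒜 a n, SetLike.coe_mem _, ?_⟩
      rw [if_pos hn] at hrep
      rw [hc n, ← hrep, one_smul]
    · rw [if_neg hn] at hrep
      exact absurd hrep one_ne_zero
  -- nonvanishing of degree-1 action
  have hL4 : ∀ n : ℕ, ∃ x ∈ 𝒜 1, MulOpposite.op x • v n ≠ 0 := by
    intro n
    by_contra h
    push_neg at h
    obtain ⟨a, haA, hav⟩ := hL0 (n + 1)
    have hmem : a ∈ 𝒜 n * 𝒜 1 := (hgen n).2 ▸ haA
    have hz : MulOpposite.op a • v 0 = 0 := by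
      refine Submodule.mul_induction_on hmem ?_ ?_
      · intro p hp q hq
        obtain ⟨cp, hcp⟩ := hgr 0 n p hp
        rw [zero_add] at hcp
        rw [MulOpposite.op_mul, mul_smul, hcp, hcM, h q hq, smul_zero]
      · intro x y hx hy
        rw [MulOpposite.op_add, add_smul, hx, hy, add_zero]
    rw [hav] at hz
    exact hne (n + 1) hz
  have hL4' : ∀ n : ℕ, ∃ x ∈ 𝒜 1, MulOpposite.op x • v' n ≠ 0 := by
    intro n
    by_contra h
    push_neg at h
    obtain ⟨a, haA, hav⟩ := hL0' (n + 1)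
    have hmem : a ∈ 𝒜 n * 𝒜 1 := (hgen n).2 ▸ haA
    have hz : MulOpposite.op a • v' 0 = 0 := by
      refine Submodule.mul_induction_on hmem ?_ ?_
      · intro p hp q hq
        obtain ⟨cp, hcp⟩ := hgr' 0 n p hp
        rw [zero_add] at hcp
        rw [MulOpposite.op_mul, mul_smul, hcp, hcM', h q hq, smul_zero]
      · intro x y hx hy
        rw [MulOpposite.op_add, add_smul, hx, hy, add_zero]
    rw [hav] at hz
    exact hne' (n + 1) hz
  -- common nonvanishing element of degree 1
  have hL5 : ∀ n t : ℕ, ∃ x ∈ 𝒜 1,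
      MulOpposite.op x • v n ≠ 0 ∧ MulOpposite.op x • v' t ≠ 0 := by
    intro n t
    obtain ⟨x, hx, hxn⟩ := hL4 n
    obtain ⟨y, hy, hyt⟩ := hL4' t
    by_cases h1 : MulOpposite.op x • v' t ≠ 0
    · exact ⟨x, hx, hxn, h1⟩
    by_cases h2 : MulOpposite.op y • v n ≠ 0
    · exact ⟨y, hy, h2, hyt⟩
    push_neg at h1 h2
    refine ⟨x + y, Submodule.add_mem _ hx hy, ?_, ?_⟩
    · rw [MulOpposite.op_add, add_smul, h2, add_zero]; exact hxn
    · rw [MulOpposite.op_add, add_smul, h1, zero_add]; exact hyt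
  -- the coefficient finsupps of φ (v n)
  set r : ℕ → (ℕ →₀ F) := fun n => b'.repr (φ (v n)) with hrdef
  set r' : ℕ → (ℕ →₀ F) := fun n => b.repr (φ.symm (v' n)) with hr'def
  -- support bounded below (degree raising)
  have hF1 : ∀ n, ↑(r n).support ⊆ Set.Ici n := by
    intro n
    obtain ⟨a, haA, hav⟩ := hL0 n
    have hmem : φ (v n) ∈ Submodule.span F (v' '' Set.Ici n) := by
      rw [← hav, map_smul]
      exact hsm' n a haA _
    rw [← hb'c] at hmem
    exact b'.repr_support_subset_of_mem_span _ hmem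
  have hF1' : ∀ n, ↑(r' n).support ⊆ Set.Ici n := by
    intro n
    obtain ⟨a, haA, hav⟩ := hL0' n
    have hmem : φ.symm (v' n) ∈ Submodule.span F (v '' Set.Ici n) := by
      rw [← hav, map_smul]
      exact hsm n a haA _
    rw [← hbc] at hmem
    exact b.repr_support_subset_of_mem_span _ hmem
  -- diagonal coefficient nonzero
  have hF2 : ∀ n, r n n ≠ 0 := by
    intro n hzero
    have hsupp : ↑(r n).support ⊆ Set.Ici (n + 1) := by
      intro j hj
      have h1 : n ≤ j := hF1 n hj
      rcases eq_or_lt_of_le h1 with rfl | h2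
      · exact absurd hzero (Finsupp.mem_support_iff.1 hj)
      · exact h2
    have hmem : φ (v n) ∈ Submodule.span F (v' '' Set.Ici (n + 1)) := by
      rw [← hb'c]
      exact b'.mem_span_image.2 hsupp
    -- pull back through φ.symm
    have hgenpull : ∀ w ∈ Submodule.span F (v' '' Set.Ici (n + 1)),
        φ.symm w ∈ Submodule.span F (v '' Set.Ici (n + 1)) := by
      intro w hw
      induction hw using Submodule.span_induction with
      | mem x hx =>
          obtain ⟨j, hj, rfl⟩ := hx
          have hmem2 : φ.symm (v' j) ∈ Submodule.span F (v '' Set.Ici j) := by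
            rw [← hbc]
            exact b.mem_span_image.2 (hF1' j)
          exact Submodule.span_mono (Set.image_mono (Set.Ici_subset_Ici.2 hj)) hmem2
      | zero => rw [map_zero]; exact Submodule.zero_mem _
      | add x y _ _ hx hy => rw [map_add]; exact Submodule.add_mem _ hx hy
      | smul f x _ hx => rw [hφs']; exact Submodule.smul_mem _ _ hx
    have hpull : v n ∈ Submodule.span F (v '' Set.Ici (n + 1)) := by
      have h2 := hgenpull _ hmem
      rwa [φ.symm_apply_apply] at h2
    rw [← hbc] at hpull
    have hsub := b.mem_span_image.1 hpull
    have hmemn : n ∈ (b.repr (b n)).support := by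
      rw [b.repr_self]
      simp
    exact absurd (hsub hmemn) (by simp)
  -- top degree of φ (v n)
  have hrsuppne : ∀ n, ((r n).support).Nonempty :=
    fun n => ⟨n, Finsupp.mem_support_iff.2 (hF2 n)⟩
  set top : ℕ → ℕ := fun n => ((r n).support).max' (hrsuppne n) with htopdef
  have htople : ∀ n j, j ∈ (r n).support → j ≤ top n :=
    fun n j hj => Finset.le_max' _ j hj
  have htopge : ∀ n, n ≤ top n :=
    fun n => htople n n (Finsupp.mem_support_iff.2 (hF2 n))
  -- coefficient of op x • φ (v n)
  have hcoef : ∀ (x : A) (hx : x ∈ 𝒜 1) (n T : ℕ) (cT : F),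
      MulOpposite.op x • v' T = cT • v' (T + 1) →
      b'.repr (MulOpposite.op x • φ (v n)) (T + 1) = (r n T) * cT := by
    intro x hx n T cT hcT
    set γ : ℕ → F := fun j => Classical.choose (hgr' j 1 x hx) with hγdef
    have hγ : ∀ j, MulOpposite.op x • v' j = γ j • v' (j + 1) :=
      fun j => Classical.choose_spec (hgr' j 1 x hx)
    have hexp : MulOpposite.op x • φ (v n)
        = ∑ j ∈ (r n).support, ((r n) j * γ j) • v' (j + 1) := by
      conv_lhs => rw [hexpand' (φ (v n))]
      rw [Finset.smul_sum]
      refine Finset.sum_congr rfl fun j _ => ?_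
      rw [hcM', hγ j, smul_smul]
    rw [hexp]
    simp only [map_sum, map_smul, ← hb', Module.Basis.repr_self, Finsupp.coe_finset_sum,
      Finset.sum_apply, Finsupp.smul_apply, Finsupp.single_apply, smul_eq_mul,
      mul_ite, mul_one, mul_zero]
    simp only [add_left_inj]
    rw [Finset.sum_ite_eq' _ T fun j => (r n) j * γ j]
    by_cases hT : T ∈ (r n).support
    · rw [if_pos hT]
      have hγeq : γ T = cT := by
        have h2 : γ T • v' (T + 1) = cT • v' (T + 1) := (hγ T).symm.trans hcT
        have h3 := congrArg (fun w => b'.repr w (T + 1)) h2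
        simpa only [map_smul, ← hb', b'.repr_self, Finsupp.smul_apply,
          Finsupp.single_eq_same, smul_eq_mul, mul_one] using h3
      rw [hγeq]
    · rw [if_neg hT]
      rw [Finsupp.notMem_support_iff.1 hT, zero_mul]
  -- top is strictly increasing
  have hstep : ∀ n, top n < top (n + 1) := by
    intro n
    obtain ⟨x, hx1, hxn, hxt⟩ := hL5 n (top n)
    obtain ⟨α, hα⟩ := hgr n 1 x hx1
    have hα0 : α ≠ 0 := fun h => hxn (by rw [hα, h, zero_smul])
    have h1 : φ (v (n + 1)) = α⁻¹ • (MulOpposite.op x • φ (v n)) := by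
      have hv : v (n + 1) = α⁻¹ • (MulOpposite.op x • v n) := by
        rw [hα, smul_smul, inv_mul_cancel₀ hα0, one_smul]
      rw [hv, hφs, map_smul]
    obtain ⟨γT, hγspec⟩ := hgr' (top n) 1 x hx1
    have hc := hcoef x hx1 n (top n) γT hγspec
    have hγ0 : γT ≠ 0 := fun h => hxt (by rw [hγspec, h, zero_smul])
    have hkey : r (n + 1) (top n + 1) ≠ 0 := by
      have : r (n + 1) (top n + 1)
          = α⁻¹ * ((r n (top n)) * γT) := by
        rw [hrdef]
        simp only [h1, map_smul, Finsupp.smul_apply, smul_eq_mul]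
        rw [hc]
      rw [this]
      exact mul_ne_zero (inv_ne_zero hα0)
        (mul_ne_zero (Finsupp.mem_support_iff.1 (Finset.max'_mem _ (hrsuppne n))) hγ0)
    calc top n < top n + 1 := Nat.lt_succ_self _
      _ ≤ top (n + 1) := htople (n + 1) _ (Finsupp.mem_support_iff.2 hkey)
  have hmono : StrictMono top := strictMono_nat_of_lt_succ hstep
  -- final assembly
  intro i
  set u := φ.symm (v' i) with hu
  have hvi : φ u = v' i := φ.apply_symm_apply _
  set s := (b.repr u).support with hs
  have hsne : s.Nonempty := by
    rcases Finset.eq_empty_or_nonempty s with h | h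
    · exfalso
      have : b.repr u = 0 := Finsupp.support_eq_empty.1 h
      have hu0 : u = 0 := by
        have := congrArg b.repr.symm this
        rwa [LinearEquiv.symm_apply_apply, map_zero] at this
      rw [hu0, map_zero] at hvi
      exact hne' i hvi.symm
    · exact h
  have hrepr : (Finsupp.single i 1 : ℕ →₀ F) = ∑ n ∈ s, (b.repr u n) • (r n) := by
    have hexp : v' i = ∑ n ∈ s, (b.repr u n) • φ (v n) := by
      conv_lhs => rw [← hvi]
      conv_lhs => rw [hexpand u]
      rw [map_sum]
      exact Finset.sum_congr rfl fun n _ => by rw [hφs]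
    have := congrArg b'.repr hexp
    rw [← hb' i, b'.repr_self] at this
    rw [this, map_sum]
    exact Finset.sum_congr rfl fun n _ => by rw [map_smul]
  set n₀ := s.min' hsne with hn₀def
  set N := s.max' hsne with hNdef
  -- evaluate at n₀
  have heval₀ : (Finsupp.single i 1 : ℕ →₀ F) n₀ = (b.repr u n₀) * (r n₀ n₀) := by
    rw [hrepr]
    rw [Finsupp.coe_finset_sum, Finset.sum_apply]
    simp only [Finsupp.smul_apply, smul_eq_mul]
    refine Finset.sum_eq_single_of_mem n₀ (Finset.min'_mem _ _) ?_
    intro n hn hne2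
    have hlt : n₀ < n := lt_of_le_of_ne (Finset.min'_le s n hn) (Ne.symm hne2)
    have : r n n₀ = 0 := by
      by_contra h
      exact absurd (hF1 n (Finsupp.mem_support_iff.2 h)) (not_le.2 hlt)
    rw [this, mul_zero]
  have hin₀ : i = n₀ := by
    by_contra hne2
    rw [Finsupp.single_eq_of_ne (Ne.symm hne2)] at heval₀
    exact mul_ne_zero (Finsupp.mem_support_iff.1 (Finset.min'_mem s hsne)) (hF2 n₀)
      heval₀.symm
  -- evaluate at top N
  have hevalT : (Finsupp.single i 1 : ℕ →₀ F) (top N) = (b.repr u N) * (r N (top N)) := by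
    rw [hrepr]
    rw [Finsupp.coe_finset_sum, Finset.sum_apply]
    simp only [Finsupp.smul_apply, smul_eq_mul]
    refine Finset.sum_eq_single_of_mem N (Finset.max'_mem _ _) ?_
    intro n hn hne2
    have hlt : n < N := lt_of_le_of_ne (Finset.le_max' s n hn) hne2
    have : r n (top N) = 0 := by
      by_contra h
      have := htople n _ (Finsupp.mem_support_iff.2 h)
      exact absurd (hmono hlt) (not_lt.2 this)
    rw [this, mul_zero]
  have hrN : r N (top N) ≠ 0 :=
    Finsupp.mem_support_iff.1 (Finset.max'_mem _ _)
  have hiT : i = top N := by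
    by_contra hne2
    rw [Finsupp.single_eq_of_ne (Ne.symm hne2)] at hevalT
    exact mul_ne_zero (Finsupp.mem_support_iff.1 (Finset.max'_mem s hsne)) hrN hevalT.symm
  -- conclude s = {i} and top i = i
  have hN_le : N ≤ top N := htopge N
  have hchain : n₀ ≤ N := Finset.min'_le s N (Finset.max'_mem s hsne)
  have hNn₀ : N = n₀ := le_antisymm (by omega) hchain
  have hseq : s = {i} := by
    apply Finset.eq_singleton_iff_unique_mem.2
    constructor
    · rw [hin₀]; exact Finset.min'_mem s hsne
    · intro n hn
      have h1 := Finset.min'_le s n hn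
      have h2 := Finset.le_max' s n hn
      omega
  have hβ : b.repr u i ≠ 0 := by
    apply Finsupp.mem_support_iff.1
    rw [← hs, hseq]
    exact Finset.mem_singleton_self i
  refine ⟨(b.repr u i)⁻¹, inv_ne_zero hβ, ?_⟩
  have hsingle : (Finsupp.single i 1 : ℕ →₀ F) = (b.repr u i) • (r i) := by
    rw [hrepr, hseq, Finset.sum_singleton]
  have hri : r i = Finsupp.single i ((b.repr u i)⁻¹) := by
    have := congrArg (fun f : ℕ →₀ F => (b.repr u i)⁻¹ • f) hsingle
    simp only [smul_smul, inv_mul_cancel₀ hβ, one_smul] at this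
    rw [← this, Finsupp.smul_single, smul_eq_mul, mul_one]
  apply b'.repr.injective
  rw [← hrdef] at *
  rw [show b'.repr (φ (v i)) = r i from rfl, hri, map_smul, ← hb' i, b'.repr_self,
    Finsupp.smul_single, smul_eq_mul, mul_one]
end
end
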